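/- arXiv:1403.4776 — 5 statements merged into one kernel-verified Lean document; each statement's English description precedes it below -/
import Mathlib

section
/- Let r ≥ 2 be an integer, let V, H : ℕ → ℕ satisfy V(0) = 1, H(0) = 1, and for all n ≥ 1, V(n) = 4(r−1)·V(n−1) + 2·H(n−1) and H(n) = 2·V(n−1), and set R(n) = V(n) + H(n). Let d = (r−1)² + 1 (as a real number), and let λ₊ = 2(r−1) + 2√d and λ₋ = 2(r−1) − 2√d. Then for every n ≥ 0, the real number R(n) equals (1 + 1/√d)·λ₊ⁿ + (1 − 1/√d)·λ₋ⁿ. -/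
theorem strip_R_closed_form (r : ℕ) (hr : 2 ≤ r) (V H R : ℕ → ℕ)
    (hV0 : V 0 = 1) (hH0 : H 0 = 1)
    (hV : ∀ n, 1 ≤ n → V n = 4 * (r - 1) * V (n - 1) + 2 * H (n - 1))
    (hH : ∀ n, 1 ≤ n → H n = 2 * V (n - 1))
    (hR : ∀ n, R n = V n + H n)
    (d : ℝ) (hd : d = ((r : ℝ) - 1) ^ 2 + 1)
    (lp lm : ℝ)
    (hlp : lp = 2 * ((r : ℝ) - 1) + 2 * Real.sqrt d)
    (hlm : lm = 2 * ((r : ℝ) - 1) - 2 * Real.sqrt d) :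
    ∀ n : ℕ,
      (R n : ℝ) =
        (1 + 1 / Real.sqrt d) * lp ^ n + (1 - 1 / Real.sqrt d) * lm ^ n := by
  set s := Real.sqrt d with hs
  have hdnn : (0:ℝ) ≤ d := by rw [hd]; positivity
  have hdpos : (0:ℝ) < d := by rw [hd]; positivity
  have hs2 : s ^ 2 = d := Real.sq_sqrt hdnn
  have hs0 : s ≠ 0 := by
    have := Real.sqrt_pos.mpr hdpos
    exact ne_of_gt this
  have hcast : ((r - 1 : ℕ) : ℝ) = (r : ℝ) - 1 := by
    have : (1:ℕ) ≤ r := by omega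
    push_cast [Nat.cast_sub this]
    ring
  -- two-step recurrence for R
  have hrec : ∀ n, R (n + 2) = 4 * (r - 1) * R (n + 1) + 4 * R n := by
    intro n
    have hV2 := hV (n + 2) (by omega)
    have hH2 := hH (n + 2) (by omega)
    have hV1 := hV (n + 1) (by omega)
    have hH1 := hH (n + 1) (by omega)
    simp only [show n + 2 - 1 = n + 1 from rfl] at hV2 hH2
    simp only [show n + 1 - 1 = n from rfl] at hV1 hH1
    rw [hR, hR, hR, hV2, hH2, hH1, hV1]
    ring
  have hlp2 : lp ^ 2 = 4 * ((r:ℝ) - 1) * lp + 4 := by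
    rw [hlp]; rw [hd] at hs2; linear_combination 4 * hs2
  have hlm2 : lm ^ 2 = 4 * ((r:ℝ) - 1) * lm + 4 := by
    rw [hlm]; rw [hd] at hs2; linear_combination 4 * hs2
  have hR0 : R 0 = 2 := by rw [hR, hV0, hH0]
  have hR1 : R 1 = 4 * (r - 1) + 4 := by
    rw [hR, hV 1 le_rfl, hH 1 le_rfl]
    simp [hV0, hH0]
  have key : ∀ n, ((R n : ℝ) = (1 + 1 / s) * lp ^ n + (1 - 1 / s) * lm ^ n) ∧
      ((R (n+1) : ℝ) = (1 + 1 / s) * lp ^ (n+1) + (1 - 1 / s) * lm ^ (n+1)) := by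
    intro n
    induction n with
    | zero =>
      constructor
      · rw [hR0]
        push_cast
        ring
      · rw [hR1]
        push_cast [hcast]
        rw [hlp, hlm]
        field_simp
        ring
    | succ k ih =>
      refine ⟨ih.2, ?_⟩
      rw [show k + 1 + 1 = k + 2 from rfl, hrec k]
      push_cast [hcast]
      rw [ih.1, ih.2]
      have e1 : lp ^ (k + 2) = (4 * ((r:ℝ) - 1) * lp + 4) * lp ^ k := by
        rw [← hlp2]; ring
      have e2 : lm ^ (k + 2) = (4 * ((r:ℝ) - 1) * lm + 4) * lm ^ k := by
        rw [← hlm2]; ring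
      rw [e1, e2]
      ring
  exact fun n => (key n).1
end

section
/- Let r ≥ 2 be an integer, let V, H : ℕ → ℕ satisfy V(0) = 1, H(0) = 1, and for all n ≥ 1, V(n) = 4(r−1)·V(n−1) + 2·H(n−1) and H(n) = 2·V(n−1), and set R(n) = V(n) + H(n). Then the sequence of real numbers R(n+1)/R(n) converges, as n → ∞, to λ₊ = 2(r−1) + 2√((r−1)² + 1). -/
theorem strip_R_ratio_limit (r : ℕ) (hr : 2 ≤ r) (V H R : ℕ → ℕ)
    (hV0 : V 0 = 1) (hH0 : H 0 = 1)
    (hV : ∀ n, 1 ≤ n → V n = 4 * (r - 1) * V (n - 1) + 2 * H (n - 1))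
    (hH : ∀ n, 1 ≤ n → H n = 2 * V (n - 1))
    (hR : ∀ n, R n = V n + H n) :
    Filter.Tendsto (fun n : ℕ => (R (n + 1) : ℝ) / (R n : ℝ)) Filter.atTop
      (nhds (2 * ((r : ℝ) - 1) + 2 * Real.sqrt (((r : ℝ) - 1) ^ 2 + 1))) := by
  -- successor forms of the recurrences
  have hV' : ∀ n : ℕ, V (n + 1) = 4 * (r - 1) * V n + 2 * H n := by
    intro n
    have := hV (n + 1) (Nat.le_add_left 1 n)
    simpa using this
  have hH' : ∀ n : ℕ, H (n + 1) = 2 * V n := by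
    intro n
    have := hH (n + 1) (Nat.le_add_left 1 n)
    simpa using this
  -- second-order recurrence for R
  have hRrec : ∀ n : ℕ, R (n + 2) = 4 * (r - 1) * R (n + 1) + 4 * R n := by
    intro n
    match n with
    | 0 =>
      rw [show (2:ℕ) = 1 + 1 from rfl, hR, hR, hR, hV' 1, hH' 1, hV' 0, hH' 0, hV0, hH0]
      ring
    | (k+1) =>
      rw [show k + 1 + 2 = (k + 2) + 1 from rfl, hR, hR, hR,
        hV' (k + 2), hH' (k + 2), hV' (k + 1), hH' (k + 1), hH' k]
      ring
  have hr1 : (1:ℕ) ≤ r := le_trans (by norm_num) hr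
  set a : ℝ := (r : ℝ) - 1 with ha_def
  have ha1 : (1:ℝ) ≤ a := by
    have : (2:ℝ) ≤ (r:ℝ) := by exact_mod_cast hr
    rw [ha_def]; linarith
  -- cast the recurrence to ℝ
  have hcast : ∀ n : ℕ, (R (n + 2) : ℝ) = 4 * a * (R (n + 1) : ℝ) + 4 * (R n : ℝ) := by
    intro n
    have := hRrec n
    have h := congrArg (fun x : ℕ => (x : ℝ)) this
    push_cast [Nat.cast_sub hr1] at h
    rw [ha_def]
    linarith [h]
  set s : ℝ := Real.sqrt (a ^ 2 + 1) with hs_def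
  have hs2 : s ^ 2 = a ^ 2 + 1 := Real.sq_sqrt (by positivity)
  have hspos : 0 < s := by rw [hs_def]; exact Real.sqrt_pos.mpr (by positivity)
  have hsa : a < s := by nlinarith [hspos]
  set l : ℝ := 2 * a + 2 * s with hl_def
  set m : ℝ := 2 * a - 2 * s with hm_def
  have hlpos : 0 < l := by rw [hl_def]; linarith
  have hmneg : m < 0 := by rw [hm_def]; linarith
  have hl2 : l ^ 2 = 4 * a * l + 4 := by rw [hl_def]; linear_combination 4 * hs2
  have hm2 : m ^ 2 = 4 * a * m + 4 := by rw [hm_def]; linear_combination 4 * hs2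
  have hR1pos : 0 < (R 1 : ℝ) := by
    have : 0 < R 1 := by
      rw [hR 1]; rw [hH' 0, hV0]; omega
    exact_mod_cast this
  set c : ℝ := ((R 2 : ℝ) - m * (R 1 : ℝ)) / (4 * s) with hc_def
  set d : ℝ := (l * (R 1 : ℝ) - (R 2 : ℝ)) / (4 * s) with hd_def
  have hcpos : 0 < c := by
    rw [hc_def]
    apply div_pos _ (by linarith)
    have : (0:ℝ) ≤ (R 2 : ℝ) := Nat.cast_nonneg _
    nlinarith
  -- closed form
  have key : ∀ n : ℕ, (R (n + 1) : ℝ) = c * l ^ n + d * m ^ n ∧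
      (R (n + 2) : ℝ) = c * l ^ (n + 1) + d * m ^ (n + 1) := by
    intro n
    induction n with
    | zero =>
      constructor
      · rw [hc_def, hd_def, hl_def, hm_def]
        field_simp
        ring
      · rw [hc_def, hd_def, hl_def, hm_def]
        field_simp
        ring
    | succ k ih =>
      refine ⟨ih.2, ?_⟩
      rw [show k + 1 + 2 = (k + 1) + 2 from rfl, hcast (k + 1), ih.2, ih.1]
      linear_combination (-(c * l ^ k)) * hl2 - (d * m ^ k) * hm2
  set q : ℝ := m / l with hq_def
  have hq : |q| < 1 := by
    rw [hq_def, abs_div, abs_of_pos hlpos, div_lt_one hlpos, abs_of_neg hmneg,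
      hl_def, hm_def]
    linarith
  have hq0 : Filter.Tendsto (fun n : ℕ => q ^ n) Filter.atTop (nhds 0) :=
    tendsto_pow_atTop_nhds_zero_of_abs_lt_one hq
  have hnum : Filter.Tendsto (fun n : ℕ => c * l + d * m * q ^ n) Filter.atTop
      (nhds (c * l)) := by
    have := hq0.const_mul (d * m)
    simpa using Filter.Tendsto.const_add (c * l) this
  have hden : Filter.Tendsto (fun n : ℕ => c + d * q ^ n) Filter.atTop (nhds c) := by
    have := hq0.const_mul d
    simpa using Filter.Tendsto.const_add c this
  have hdiv := hnum.div hden hcpos.ne'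
  have hval : c * l / c = l := by
    field_simp
  rw [hval] at hdiv
  have heq : ∀ n : ℕ, ((R (n + 2) : ℝ) / (R (n + 1) : ℝ)) =
      (c * l + d * m * q ^ n) / (c + d * q ^ n) := by
    intro n
    rw [(key n).2, (key n).1]
    have hln : l ^ n ≠ 0 := pow_ne_zero _ hlpos.ne'
    rw [show c * l ^ (n + 1) + d * m ^ (n + 1) = (c * l + d * m * q ^ n) * l ^ n by
        rw [hq_def, div_pow]; field_simp; ring,
      show c * l ^ n + d * m ^ n = (c + d * q ^ n) * l ^ n by
        rw [hq_def, div_pow]; field_simp,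
      mul_div_mul_right _ _ hln]
  have hfin : Filter.Tendsto (fun n : ℕ => (R (n + 2) : ℝ) / (R (n + 1) : ℝ))
      Filter.atTop (nhds l) := by
    exact Filter.Tendsto.congr (fun n => (heq n).symm) hdiv
  rw [← Filter.tendsto_add_atTop_iff_nat 1]
  exact hfin
end

section
/- For every positive integer n, every tatami covering of the n×n grid contains at most n monominoes. -/
/-- A monomino block: a single cell `(i, j)`. -/
def IsMonomino (b : Finset (ℕ × ℕ)) : Prop := ∃ i j : ℕ, b = {(i, j)}

/-- A horizontal domino block: cells `(i, j)` and `(i, j+1)`. -/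
def IsHDomino (b : Finset (ℕ × ℕ)) : Prop := ∃ i j : ℕ, b = {(i, j), (i, j + 1)}

/-- A vertical domino block: cells `(i, j)` and `(i+1, j)`. -/
def IsVDomino (b : Finset (ℕ × ℕ)) : Prop := ∃ i j : ℕ, b = {(i, j), (i + 1, j)}

/-- `IsTatami m n T` : `T` is a tatami covering of the `m × n` grid, i.e. a
partition of `{0,…,m−1} × {0,…,n−1}` into monominoes, horizontal dominoes and
vertical dominoes such that no four blocks meet at a point. -/
def IsTatami (m n : ℕ) (T : Finset (Finset (ℕ × ℕ))) : Prop :=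
  (∀ b ∈ T, IsMonomino b ∨ IsHDomino b ∨ IsVDomino b) ∧
  (∀ b ∈ T, ∀ c ∈ T, b ≠ c → Disjoint b c) ∧
  (∀ p : ℕ × ℕ, (p.1 < m ∧ p.2 < n) ↔ ∃ b ∈ T, p ∈ b) ∧
  (∀ i j : ℕ, ∀ b₁ ∈ T, ∀ b₂ ∈ T, ∀ b₃ ∈ T, ∀ b₄ ∈ T,
    (i, j) ∈ b₁ → (i + 1, j) ∈ b₂ → (i, j + 1) ∈ b₃ → (i + 1, j + 1) ∈ b₄ →
    ¬(b₁ ≠ b₂ ∧ b₁ ≠ b₃ ∧ b₁ ≠ b₄ ∧ b₂ ≠ b₃ ∧ b₂ ≠ b₄ ∧ b₃ ≠ b₄))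

open Classical in
/-- The number of monominoes of a covering. -/
noncomputable def monoCount (T : Finset (Finset (ℕ × ℕ))) : ℕ :=
  (T.filter IsMonomino).card

open Classical in
/-- The number of vertical dominoes of a covering. -/
noncomputable def vCount (T : Finset (Finset (ℕ × ℕ))) : ℕ :=
  (T.filter IsVDomino).card

open Classical in
/-- The number of horizontal dominoes of a covering. -/
noncomputable def hCount (T : Finset (Finset (ℕ × ℕ))) : ℕ :=
  (T.filter IsHDomino).card

/-- `sd n k` : the subsets of `{1, 2, …, n}` whose elements sum to `k`. -/
def sd (n k : ℕ) : Finset (Finset ℕ) :=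
  (Finset.Icc 1 n).powerset.filter (fun s => s.sum id = k)

namespace TatamiProof
variable {n : ℕ} {T : Finset (Finset (ℕ × ℕ))}

lemma cover_of (hT : IsTatami n n T) {p : ℕ × ℕ} (h1 : p.1 < n) (h2 : p.2 < n) :
    ∃ b ∈ T, p ∈ b := (hT.2.2.1 p).mp ⟨h1, h2⟩

lemma grid_of (hT : IsTatami n n T) {b : Finset (ℕ × ℕ)} {p : ℕ × ℕ}
    (hb : b ∈ T) (hp : p ∈ b) : p.1 < n ∧ p.2 < n :=
  (hT.2.2.1 p).mpr ⟨b, hb, hp⟩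

lemma uniq (hT : IsTatami n n T) {b b' : Finset (ℕ × ℕ)} {p : ℕ × ℕ}
    (hb : b ∈ T) (hb' : b' ∈ T) (hp : p ∈ b) (hp' : p ∈ b') : b = b' := by
  by_contra h
  exact (Finset.disjoint_left.mp (hT.2.1 b hb b' hb' h) hp) hp'

lemma two_cells (hT : IsTatami n n T) {b : Finset (ℕ × ℕ)} {p q : ℕ × ℕ}
    (hb : b ∈ T) (hp : p ∈ b) (hq : q ∈ b) (hne : p ≠ q) :
    b = {p, q} ∧ ((p.1 = q.1 ∧ (p.2 + 1 = q.2 ∨ q.2 + 1 = p.2)) ∨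
      (p.2 = q.2 ∧ (p.1 + 1 = q.1 ∨ q.1 + 1 = p.1))) := by
  rcases hT.1 b hb with ⟨i, j, rfl⟩ | ⟨i, j, rfl⟩ | ⟨i, j, rfl⟩ <;>
    simp only [Finset.mem_insert, Finset.mem_singleton] at hp hq
  · exact absurd (hp.trans hq.symm) hne
  · rcases hp with rfl | rfl <;> rcases hq with rfl | rfl
    · exact absurd rfl hne
    · exact ⟨rfl, Or.inl ⟨rfl, Or.inl rfl⟩⟩
    · exact ⟨Finset.pair_comm _ _, Or.inl ⟨rfl, Or.inr rfl⟩⟩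
    · exact absurd rfl hne
  · rcases hp with rfl | rfl <;> rcases hq with rfl | rfl
    · exact absurd rfl hne
    · exact ⟨rfl, Or.inr ⟨rfl, Or.inl rfl⟩⟩
    · exact ⟨Finset.pair_comm _ _, Or.inr ⟨rfl, Or.inr rfl⟩⟩
    · exact absurd rfl hne

lemma step_NE (hT : IsTatami n n T) {b : Finset (ℕ × ℕ)} {x y : ℕ}
    (hb : b ∈ T) (hmem : (x+1, y) ∈ b) (h1 : (x, y) ∉ b) (h2 : (x+1, y+1) ∉ b)
    (hy : y + 2 ≤ n) :
    ∃ b' ∈ T, b' = {(x, y), (x, y+1)} ∨ b' = {(x, y+1), (x+1, y+1)} := by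
  have hg := grid_of hT hb hmem
  obtain ⟨b1, hb1, hp1⟩ := cover_of hT (p := (x, y)) (by simp; omega) (by simp; omega)
  obtain ⟨b3, hb3, hp3⟩ := cover_of hT (p := (x, y+1)) (by simp; omega) (by simp; omega)
  obtain ⟨b4, hb4, hp4⟩ := cover_of hT (p := (x+1, y+1)) (by simp; omega) (by simp; omega)
  by_cases e13 : b1 = b3
  · subst e13
    exact ⟨b1, hb1, Or.inl (two_cells hT hb1 hp1 hp3 (by simp)).1⟩
  by_cases e34 : b3 = b4
  · subst e34
    exact ⟨b3, hb3, Or.inr (two_cells hT hb3 hp3 hp4 (by simp)).1⟩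
  exfalso
  refine hT.2.2.2 x y b1 hb1 b hb b3 hb3 b4 hb4 hp1 hmem hp3 hp4 ⟨?_, e13, ?_, ?_, ?_, e34⟩
  · rintro rfl; exact h1 hp1
  · rintro rfl
    obtain ⟨_, hadj⟩ := two_cells hT hb1 hp1 hp4 (by simp)
    simp only [Prod.fst, Prod.snd] at hadj; omega
  · rintro rfl
    obtain ⟨_, hadj⟩ := two_cells hT hb hmem hp3 (by simp)
    simp only [Prod.fst, Prod.snd] at hadj; omega
  · rintro rfl; exact h2 hp4

lemma step_NW (hT : IsTatami n n T) {b : Finset (ℕ × ℕ)} {x y : ℕ}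
    (hb : b ∈ T) (hmem : (x+1, y+1) ∈ b) (h1 : (x, y+1) ∉ b) (h2 : (x+1, y) ∉ b) :
    ∃ b' ∈ T, b' = {(x, y), (x, y+1)} ∨ b' = {(x, y), (x+1, y)} := by
  have hg := grid_of hT hb hmem
  obtain ⟨b1, hb1, hp1⟩ := cover_of hT (p := (x, y)) (by simp; omega) (by simp; omega)
  obtain ⟨b2, hb2, hp2⟩ := cover_of hT (p := (x+1, y)) (by simp; omega) (by simp; omega)
  obtain ⟨b3, hb3, hp3⟩ := cover_of hT (p := (x, y+1)) (by simp; omega) (by simp; omega)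
  by_cases e13 : b1 = b3
  · subst e13
    exact ⟨b1, hb1, Or.inl (two_cells hT hb1 hp1 hp3 (by simp)).1⟩
  by_cases e12 : b1 = b2
  · subst e12
    exact ⟨b1, hb1, Or.inr (two_cells hT hb1 hp1 hp2 (by simp)).1⟩
  exfalso
  refine hT.2.2.2 x y b1 hb1 b2 hb2 b3 hb3 b hb hp1 hp2 hp3 hmem ⟨e12, e13, ?_, ?_, ?_, ?_⟩
  · rintro rfl
    obtain ⟨_, hadj⟩ := two_cells hT hb1 hp1 hmem (by simp)
    simp only [Prod.fst, Prod.snd] at hadj; omega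
  · rintro rfl
    obtain ⟨_, hadj⟩ := two_cells hT hb2 hp2 hp3 (by simp)
    simp only [Prod.fst, Prod.snd] at hadj; omega
  · rintro rfl; exact h2 hp2
  · rintro rfl; exact h1 hp3

lemma step_SE (hT : IsTatami n n T) {b : Finset (ℕ × ℕ)} {x y : ℕ}
    (hb : b ∈ T) (hmem : (x, y) ∈ b) (h1 : (x, y+1) ∉ b) (h2 : (x+1, y) ∉ b)
    (hx : x + 2 ≤ n) (hy : y + 2 ≤ n) :
    ∃ b' ∈ T, b' = {(x, y+1), (x+1, y+1)} ∨ b' = {(x+1, y), (x+1, y+1)} := by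
  obtain ⟨b2, hb2, hp2⟩ := cover_of hT (p := (x+1, y)) (by simp; omega) (by simp; omega)
  obtain ⟨b3, hb3, hp3⟩ := cover_of hT (p := (x, y+1)) (by simp; omega) (by simp; omega)
  obtain ⟨b4, hb4, hp4⟩ := cover_of hT (p := (x+1, y+1)) (by simp; omega) (by simp; omega)
  by_cases e34 : b3 = b4
  · subst e34
    exact ⟨b3, hb3, Or.inl (two_cells hT hb3 hp3 hp4 (by simp)).1⟩
  by_cases e24 : b2 = b4
  · subst e24
    exact ⟨b2, hb2, Or.inr (two_cells hT hb2 hp2 hp4 (by simp)).1⟩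
  exfalso
  refine hT.2.2.2 x y b hb b2 hb2 b3 hb3 b4 hb4 hmem hp2 hp3 hp4 ⟨?_, ?_, ?_, ?_, e24, e34⟩
  · rintro rfl; exact h2 hp2
  · rintro rfl; exact h1 hp3
  · rintro rfl
    obtain ⟨_, hadj⟩ := two_cells hT hb hmem hp4 (by simp)
    simp only [Prod.fst, Prod.snd] at hadj; omega
  · rintro rfl
    obtain ⟨_, hadj⟩ := two_cells hT hb2 hp2 hp3 (by simp)
    simp only [Prod.fst, Prod.snd] at hadj; omega

lemma step_SW (hT : IsTatami n n T) {b : Finset (ℕ × ℕ)} {x y : ℕ}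
    (hb : b ∈ T) (hmem : (x, y+1) ∈ b) (h1 : (x, y) ∉ b) (h2 : (x+1, y+1) ∉ b)
    (hx : x + 2 ≤ n) :
    ∃ b' ∈ T, b' = {(x, y), (x+1, y)} ∨ b' = {(x+1, y), (x+1, y+1)} := by
  have hg := grid_of hT hb hmem
  obtain ⟨b1, hb1, hp1⟩ := cover_of hT (p := (x, y)) (by simp; omega) (by simp; omega)
  obtain ⟨b2, hb2, hp2⟩ := cover_of hT (p := (x+1, y)) (by simp; omega) (by simp; omega)
  obtain ⟨b4, hb4, hp4⟩ := cover_of hT (p := (x+1, y+1)) (by simp; omega) (by simp; omega)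
  by_cases e12 : b1 = b2
  · subst e12
    exact ⟨b1, hb1, Or.inl (two_cells hT hb1 hp1 hp2 (by simp)).1⟩
  by_cases e24 : b2 = b4
  · subst e24
    exact ⟨b2, hb2, Or.inr (two_cells hT hb2 hp2 hp4 (by simp)).1⟩
  exfalso
  refine hT.2.2.2 x y b1 hb1 b2 hb2 b hb b4 hb4 hp1 hp2 hmem hp4 ⟨e12, ?_, ?_, ?_, e24, ?_⟩
  · rintro rfl; exact h1 hp1
  · rintro rfl
    obtain ⟨_, hadj⟩ := two_cells hT hb1 hp1 hp4 (by simp)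
    simp only [Prod.fst, Prod.snd] at hadj; omega
  · rintro rfl
    obtain ⟨_, hadj⟩ := two_cells hT hb2 hp2 hmem (by simp)
    simp only [Prod.fst, Prod.snd] at hadj; omega
  · rintro rfl; exact h2 hp4


lemma ray_NE (hT : IsTatami n n T) :
    ∀ s x y, 1 ≤ s → ∀ b, b ∈ T → (x+s, y) ∈ b →
    (∀ w ∈ b, w = (x+s, y) ∨ w = (x+s+1, y) ∨ (w.1 = x+s ∧ w.2 + 1 = y)) →
    y + s + 1 ≤ n →
    ∃ b' ∈ T, (x, y+s) ∈ b' ∧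
      ((∃ y₀, y₀ + 1 = y + s ∧ b' = {(x, y₀), (x, y+s)}) ∨
        b' = {(x, y+s), (x+1, y+s)}) := by
  intro s
  induction s with
  | zero => omega
  | succ s ih =>
    intro x y _ b hb hmem hexp hbd
    rcases Nat.eq_zero_or_pos s with rfl | hs
    · -- base case s+1 = 1
      obtain ⟨b', hb', hform⟩ := step_NE hT hb
        (by rw [show x + 1 + 0 = x + 1 by omega] at hmem ⊢; exact hmem)
        (by intro h; rcases hexp _ h with h | h | h <;>
              simp only [Prod.mk.injEq, Prod.fst, Prod.snd] at h <;> omega)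
        (by intro h; rcases hexp _ h with h | h | h <;>
              simp only [Prod.mk.injEq, Prod.fst, Prod.snd] at h <;> omega)
        (by omega)
      rcases hform with hf | hf
      · exact ⟨b', hb', by rw [hf]; simp [show y + (0+1) = y + 1 by omega],
          Or.inl ⟨y, by omega, by rw [hf, show y + (0+1) = y + 1 by omega]⟩⟩
      · exact ⟨b', hb', by rw [hf]; simp [show y + (0+1) = y + 1 by omega],
          Or.inr (by rw [hf, show y + (0+1) = y + 1 by omega])⟩
    · -- inductive step
      rw [show x + (s+1) = x + 1 + s by omega] at hmem hexp
      obtain ⟨bs, hbs, hms, hforms⟩ := ih (x+1) y hs b hb hmem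
        (by intro w hw
            rcases hexp w hw with h | h | h
            · exact Or.inl h
            · exact Or.inr (Or.inl h)
            · exact Or.inr (Or.inr h))
        (by omega)
      have h1 : (x, y+s) ∉ bs := by
        intro h
        rcases hforms with ⟨y₀, hy₀, hf⟩ | hf <;> rw [hf] at h <;>
          simp only [Finset.mem_insert, Finset.mem_singleton, Prod.mk.injEq] at h <;> omega
      have h2 : (x+1, y+s+1) ∉ bs := by
        intro h
        rcases hforms with ⟨y₀, hy₀, hf⟩ | hf <;> rw [hf] at h <;>
          simp only [Finset.mem_insert, Finset.mem_singleton, Prod.mk.injEq] at h <;> omega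
      obtain ⟨b', hb', hform⟩ := step_NE hT hbs hms h1 h2 (by omega)
      rcases hform with hf | hf
      · refine ⟨b', hb', by rw [hf]; simp [show y + (s+1) = y + s + 1 by omega], ?_⟩
        exact Or.inl ⟨y+s, by omega, by rw [hf, show y + (s+1) = y + s + 1 by omega]⟩
      · refine ⟨b', hb', by rw [hf]; simp [show y + (s+1) = y + s + 1 by omega], ?_⟩
        exact Or.inr (by rw [hf, show y + (s+1) = y + s + 1 by omega])

lemma ray_NW (hT : IsTatami n n T) :
    ∀ s x y, 1 ≤ s → ∀ b, b ∈ T → (x+s, y+s) ∈ b →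
    (∀ w ∈ b, w = (x+s, y+s) ∨ w = (x+s+1, y+s) ∨ w = (x+s, y+s+1)) →
    ∃ b' ∈ T, (x, y) ∈ b' ∧
      (b' = {(x, y), (x, y+1)} ∨ b' = {(x, y), (x+1, y)}) := by
  intro s
  induction s with
  | zero => omega
  | succ s ih =>
    intro x y _ b hb hmem hexp
    rcases Nat.eq_zero_or_pos s with rfl | hs
    · rw [show x + (0+1) = x + 1 by omega, show y + (0+1) = y + 1 by omega] at hmem hexp
      obtain ⟨b', hb', hform⟩ := step_NW hT hb hmem
        (by intro h; rcases hexp _ h with h | h | h <;>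
              simp only [Prod.mk.injEq] at h <;> omega)
        (by intro h; rcases hexp _ h with h | h | h <;>
              simp only [Prod.mk.injEq] at h <;> omega)
      rcases hform with hf | hf
      · exact ⟨b', hb', by rw [hf]; simp, Or.inl hf⟩
      · exact ⟨b', hb', by rw [hf]; simp, Or.inr hf⟩
    · rw [show x + (s+1) = x + 1 + s by omega, show y + (s+1) = y + 1 + s by omega]
        at hmem hexp
      obtain ⟨bs, hbs, hms, hforms⟩ := ih (x+1) (y+1) hs b hb hmem hexp
      have h1 : (x, y+1) ∉ bs := by
        intro h
        rcases hforms with hf | hf <;> rw [hf] at h <;>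
          simp only [Finset.mem_insert, Finset.mem_singleton, Prod.mk.injEq] at h <;> omega
      have h2 : (x+1, y) ∉ bs := by
        intro h
        rcases hforms with hf | hf <;> rw [hf] at h <;>
          simp only [Finset.mem_insert, Finset.mem_singleton, Prod.mk.injEq] at h <;> omega
      obtain ⟨b', hb', hform⟩ := step_NW hT hbs hms h1 h2
      rcases hform with hf | hf
      · exact ⟨b', hb', by rw [hf]; simp, Or.inl hf⟩
      · exact ⟨b', hb', by rw [hf]; simp, Or.inr hf⟩

lemma ray_SE (hT : IsTatami n n T) :
    ∀ s x y, 1 ≤ s → ∀ b, b ∈ T → (x, y) ∈ b →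
    (∀ w ∈ b, w = (x, y) ∨ (w.1 + 1 = x ∧ w.2 = y) ∨ (w.1 = x ∧ w.2 + 1 = y)) →
    x + s + 1 ≤ n → y + s + 1 ≤ n →
    ∃ b' ∈ T, (x+s, y+s) ∈ b' ∧
      ((∃ x₀, x₀ + 1 = x + s ∧ b' = {(x₀, y+s), (x+s, y+s)}) ∨
        (∃ y₀, y₀ + 1 = y + s ∧ b' = {(x+s, y₀), (x+s, y+s)})) := by
  intro s
  induction s with
  | zero => omega
  | succ s ih =>
    intro x y _ b hb hmem hexp hbx hby
    rcases Nat.eq_zero_or_pos s with rfl | hs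
    · obtain ⟨b', hb', hform⟩ := step_SE hT hb hmem
        (by intro h; rcases hexp _ h with h | h | h <;>
              simp only [Prod.mk.injEq, Prod.fst, Prod.snd] at h <;> omega)
        (by intro h; rcases hexp _ h with h | h | h <;>
              simp only [Prod.mk.injEq, Prod.fst, Prod.snd] at h <;> omega)
        (by omega) (by omega)
      rw [show x + (0+1) = x + 1 by omega, show y + (0+1) = y + 1 by omega]
      rcases hform with hf | hf
      · exact ⟨b', hb', by rw [hf]; simp, Or.inl ⟨x, by omega, hf⟩⟩
      · exact ⟨b', hb', by rw [hf]; simp, Or.inr ⟨y, by omega, hf⟩⟩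
    · obtain ⟨bs, hbs, hms, hforms⟩ := ih x y hs b hb hmem hexp (by omega) (by omega)
      have h1 : (x+s, y+s+1) ∉ bs := by
        intro h
        rcases hforms with ⟨x₀, hx₀, hf⟩ | ⟨y₀, hy₀, hf⟩ <;> rw [hf] at h <;>
          simp only [Finset.mem_insert, Finset.mem_singleton, Prod.mk.injEq] at h <;> omega
      have h2 : (x+s+1, y+s) ∉ bs := by
        intro h
        rcases hforms with ⟨x₀, hx₀, hf⟩ | ⟨y₀, hy₀, hf⟩ <;> rw [hf] at h <;>
          simp only [Finset.mem_insert, Finset.mem_singleton, Prod.mk.injEq] at h <;> omega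
      obtain ⟨b', hb', hform⟩ := step_SE hT hbs hms h1 h2 (by omega) (by omega)
      rw [show x + (s+1) = x + s + 1 by omega, show y + (s+1) = y + s + 1 by omega]
      rcases hform with hf | hf
      · exact ⟨b', hb', by rw [hf]; simp, Or.inl ⟨x+s, by omega, hf⟩⟩
      · exact ⟨b', hb', by rw [hf]; simp, Or.inr ⟨y+s, by omega, hf⟩⟩

lemma ray_SW (hT : IsTatami n n T) :
    ∀ s x y, 1 ≤ s → ∀ b, b ∈ T → (x, y+s) ∈ b →
    (∀ w ∈ b, w = (x, y+s) ∨ (w.1 + 1 = x ∧ w.2 = y+s) ∨ w = (x, y+s+1)) →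
    x + s + 1 ≤ n →
    ∃ b' ∈ T, (x+s, y) ∈ b' ∧
      ((∃ x₀, x₀ + 1 = x + s ∧ b' = {(x₀, y), (x+s, y)}) ∨
        b' = {(x+s, y), (x+s, y+1)}) := by
  intro s
  induction s with
  | zero => omega
  | succ s ih =>
    intro x y _ b hb hmem hexp hbx
    rcases Nat.eq_zero_or_pos s with rfl | hs
    · rw [show y + (0+1) = y + 1 by omega] at hmem hexp
      obtain ⟨b', hb', hform⟩ := step_SW hT hb hmem
        (by intro h; rcases hexp _ h with h | h | h <;>
              simp only [Prod.mk.injEq, Prod.fst, Prod.snd] at h <;> omega)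
        (by intro h; rcases hexp _ h with h | h | h <;>
              simp only [Prod.mk.injEq, Prod.fst, Prod.snd] at h <;> omega)
        (by omega)
      rw [show x + (0+1) = x + 1 by omega]
      rcases hform with hf | hf
      · exact ⟨b', hb', by rw [hf]; simp, Or.inl ⟨x, by omega, hf⟩⟩
      · exact ⟨b', hb', by rw [hf]; simp, Or.inr hf⟩
    · rw [show y + (s+1) = y + 1 + s by omega] at hmem hexp
      obtain ⟨bs, hbs, hms, hforms⟩ := ih x (y+1) hs b hb hmem hexp (by omega)
      have h1 : (x+s, y) ∉ bs := by
        intro h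
        rcases hforms with ⟨x₀, hx₀, hf⟩ | hf <;> rw [hf] at h <;>
          simp only [Finset.mem_insert, Finset.mem_singleton, Prod.mk.injEq] at h <;> omega
      have h2 : (x+s+1, y+1) ∉ bs := by
        intro h
        rcases hforms with ⟨x₀, hx₀, hf⟩ | hf <;> rw [hf] at h <;>
          simp only [Finset.mem_insert, Finset.mem_singleton, Prod.mk.injEq] at h <;> omega
      obtain ⟨b', hb', hform⟩ := step_SW hT hbs hms h1 h2 (by omega)
      rw [show x + (s+1) = x + s + 1 by omega]
      rcases hform with hf | hf
      · exact ⟨b', hb', by rw [hf]; simp, Or.inl ⟨x+s, by omega, hf⟩⟩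
      · exact ⟨b', hb', by rw [hf]; simp, Or.inr hf⟩


/-- `Aprop`: no N-source/S-source pair in configuration
  (N at `(a,b)`, S at `(c,e)`, `u`-gap `2t`, `v`-gap `2δ`, with grid-room conditions). -/
def Aprop (n : ℕ) (T : Finset (Finset (ℕ × ℕ))) (t δ : ℕ) : Prop :=
  ∀ a b c e bz bw, bz ∈ T → bw ∈ T → (a, b) ∈ bz → (c, e) ∈ bw →
    (∀ w ∈ bz, w = (a, b) ∨ w = (a+1, b)) →
    (∀ w ∈ bw, w = (c, e) ∨ (w.1 + 1 = c ∧ w.2 = e)) →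
    a + b = c + e + 2*t → a + e = b + c + 2*δ →
    a ≤ b + c + e → a + b + e + 2 ≤ 2*n + c → False

/-- `Bprop`: no E-source/W-source pair in the mirrored configuration. -/
def Bprop (n : ℕ) (T : Finset (Finset (ℕ × ℕ))) (t δ : ℕ) : Prop :=
  ∀ a b c e bx bw, bx ∈ T → bw ∈ T → (a, b) ∈ bx → (c, e) ∈ bw →
    (∀ w ∈ bx, w = (a, b) ∨ (w.1 = a ∧ w.2 + 1 = b)) →
    (∀ w ∈ bw, w = (c, e) ∨ w = (c, e+1)) →
    c + e = a + b + 2*t → a + e = b + c + 2*δ →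
    e ≤ a + b + c → a + b + e + 2 ≤ 2*n + c → a + c + e + 2 ≤ 2*n + b → False

lemma mem_pair_elim {q r s : ℕ × ℕ} (h : q ∈ ({r, s} : Finset (ℕ × ℕ))) :
    q = r ∨ q = s := by simpa using h

lemma pair_ext {a b c d : ℕ} (h1 : a = c) (h2 : b = d) : ((a, b) : ℕ × ℕ) = (c, d) := by
  subst h1; subst h2; rfl

lemma mem_pair_left {p q r : ℕ × ℕ} (h : p = q) : p ∈ ({q, r} : Finset (ℕ × ℕ)) := by
  simp [h]

lemma mem_pair_right {p q r : ℕ × ℕ} (h : p = r) : p ∈ ({q, r} : Finset (ℕ × ℕ)) := by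
  simp [h]

lemma noAB (hT : IsTatami n n T) :
    ∀ m t δ, 1 ≤ t → 1 ≤ δ → t + δ ≤ m → Aprop n T t δ ∧ Bprop n T t δ := by
  intro m
  induction m with
  | zero => intro t δ ht hδ hm; omega
  | succ m ihm =>
    intro t δ ht hδ hm
    constructor
    · -- Aprop
      intro a b c e bz bw hbz hbw hzmem hwmem hNz hSw hE1 hE2 hIV hV
      have hga := grid_of hT hbz hzmem
      have hgc := grid_of hT hbw hwmem
      simp only [Prod.fst, Prod.snd] at hga hgc
      obtain ⟨qx, rfl⟩ : ∃ qx, a = qx + t := ⟨a - t, by omega⟩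
      obtain ⟨qy, rfl⟩ : ∃ qy, b = qy + t := ⟨b - t, by omega⟩
      have hqxc : qx = c + δ := by omega
      have hqye : qy + δ = e := by omega
      -- crossing 1 : cell (qx, qy), forced block {(qx,qy),(qx,qy+1)}
      obtain ⟨bq, hbq, hqmem, F1⟩ := ray_NW hT t qx qy ht bz hbz hzmem
        (by intro w hw; exact (hNz w hw).imp id Or.inl)
      obtain ⟨bq', hbq', hqmem', F2⟩ := ray_SW hT δ c qy hδ bw hbw
        (by rw [hqye]; exact hwmem)
        (by intro w hw
            rcases hSw w hw with h | h
            · left; rw [hqye]; exact h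
            · exact Or.inr (Or.inl ⟨h.1, by rw [hqye]; exact h.2⟩))
        (by omega)
      rw [← hqxc] at hqmem' F2
      have hbqq : bq = bq' := uniq hT hbq hbq' hqmem hqmem'
      have hXblock : bq = {(qx, qy), (qx, qy+1)} := by
        rcases F1 with hf1 | hf1
        · exact hf1
        · exfalso
          rcases F2 with ⟨x₀, hx₀, hf2⟩ | hf2
          · have : (qx+1, qy) ∈ ({(x₀, qy), (qx, qy)} : Finset (ℕ × ℕ)) := by
              rw [← hf2, ← hbqq, hf1]; simp
            rcases mem_pair_elim this with h | h <;>
              simp only [Prod.mk.injEq] at h <;> omega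
          · have : (qx+1, qy) ∈ ({(qx, qy), (qx, qy+1)} : Finset (ℕ × ℕ)) := by
              rw [← hf2, ← hbqq, hf1]; simp
            rcases mem_pair_elim this with h | h <;>
              simp only [Prod.mk.injEq] at h <;> omega
      -- crossing 2 : cell (q2x, qy+t+δ), forced block {(q2x,y₀),(q2x,qy+t+δ)}
      obtain ⟨q2x, hq2x⟩ : ∃ q2x, q2x + δ = qx + t := ⟨qx + t - δ, by omega⟩
      have hbd : qy + t + δ + 1 ≤ n := by omega
      obtain ⟨b2, hb2, hm2, G1⟩ := ray_NE hT δ q2x (qy+t) hδ bz hbz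
        (by rw [hq2x]; exact hzmem)
        (by intro w hw
            rcases hNz w hw with h | h
            · left; rw [hq2x]; exact h
            · right; left; rw [hq2x]; exact h)
        (by omega)
      obtain ⟨b2', hb2', hm2', G2⟩ := ray_SE hT t c e ht bw hbw hwmem
        (by intro w hw; exact (hSw w hw).imp id Or.inl)
        (by omega) (by omega)
      have hct : c + t = q2x := by omega
      have het : e + t = qy + t + δ := by omega
      rw [hct, het] at hm2' G2
      have hb22 : b2 = b2' := uniq hT hb2 hb2' hm2 hm2'
      obtain ⟨y₀, hy₀, hYblock⟩ :
          ∃ y₀, y₀ + 1 = qy + t + δ ∧ b2 = {(q2x, y₀), (q2x, qy+t+δ)} := by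
        rcases G1 with ⟨y₀, hy₀, hf1⟩ | hf1
        · exact ⟨y₀, hy₀, hf1⟩
        · exfalso
          rcases G2 with ⟨x₀, hx₀, hf2⟩ | ⟨y₁, hy₁, hf2⟩
          · have : (q2x+1, qy+t+δ) ∈
                ({(x₀, qy+t+δ), (q2x, qy+t+δ)} : Finset (ℕ × ℕ)) := by
              rw [← hf2, ← hb22, hf1]; simp
            rcases mem_pair_elim this with h | h <;>
              simp only [Prod.mk.injEq] at h <;> omega
          · have : (q2x+1, qy+t+δ) ∈
                ({(q2x, y₁), (q2x, qy+t+δ)} : Finset (ℕ × ℕ)) := by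
              rw [← hf2, ← hb22, hf1]; simp
            rcases mem_pair_elim this with h | h <;>
              simp only [Prod.mk.injEq] at h <;> omega
      -- case analysis on t, δ
      by_cases ht1 : t = 1
      · by_cases hδ1 : δ = 1
        · -- t = δ = 1
          have hXm : (qx, qy+1) ∈ bq := by rw [hXblock]; simp
          have hYm : (qx, qy+1) ∈ b2 := by
            rw [hYblock]; exact mem_pair_left (pair_ext (by omega) (by omega))
          have hbb : bq = b2 := uniq hT hbq hb2 hXm hYm
          have hmm : (q2x, qy + t + δ) ∈ bq := by rw [hbb, hYblock]; simp
          rw [hXblock] at hmm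
          rcases mem_pair_elim hmm with h | h <;>
            simp only [Prod.mk.injEq] at h <;> omega
        · -- t = 1, δ ≥ 2
          obtain ⟨δ', hde⟩ : ∃ δ', δ' + 1 = δ := ⟨δ - 1, by omega⟩
          have hδ' : 1 ≤ δ' := by omega
          obtain ⟨b3, hb3, hm3, H⟩ := ray_NE hT δ' q2x (qy+1) hδ' bq hbq
            (by have h : ((q2x + δ' : ℕ), (qy + 1 : ℕ)) = (qx, qy+1) :=
                  pair_ext (by omega) (by omega)
                rw [h, hXblock]; simp)
            (by intro w hw
                rw [hXblock] at hw
                rcases mem_pair_elim hw with rfl | rfl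
                · exact Or.inr (Or.inr ⟨by omega, by omega⟩)
                · exact Or.inl (pair_ext (by omega) (by omega)))
            (by omega)
          have htgt : ((q2x : ℕ), qy + 1 + δ') = (q2x, y₀) := pair_ext rfl (by omega)
          rw [htgt] at hm3 H
          have hYm : (q2x, y₀) ∈ b2 := by rw [hYblock]; simp
          have hbb : b3 = b2 := uniq hT hb3 hb2 hm3 hYm
          have hmm : (q2x, qy + t + δ) ∈ b3 := by rw [hbb, hYblock]; simp
          rcases H with ⟨y₁, hy₁, hf⟩ | hf <;> rw [hf] at hmm <;>
            rcases mem_pair_elim hmm with h | h <;>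
              simp only [Prod.mk.injEq] at h <;> omega
      · by_cases hδ1 : δ = 1
        · -- δ = 1, t ≥ 2
          obtain ⟨t', hte⟩ : ∃ t', t' + 1 = t := ⟨t - 1, by omega⟩
          have ht' : 1 ≤ t' := by omega
          have hXm : (qx, qy+1) ∈ bq := by rw [hXblock]; simp
          obtain ⟨b4, hb4, hm4, H⟩ := ray_SE hT t' qx (qy+1) ht' bq hbq hXm
            (by intro w hw
                rw [hXblock] at hw
                rcases mem_pair_elim hw with rfl | rfl
                · exact Or.inr (Or.inr ⟨by omega, by omega⟩)
                · exact Or.inl rfl)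
            (by omega) (by omega)
          have htgt : ((qx + t' : ℕ), qy + 1 + t') = (q2x, y₀) :=
            pair_ext (by omega) (by omega)
          rw [htgt] at hm4 H
          have hYm : (q2x, y₀) ∈ b2 := by rw [hYblock]; simp
          have hbb : b4 = b2 := uniq hT hb4 hb2 hm4 hYm
          have hmm : (q2x, qy + t + δ) ∈ b4 := by rw [hbb, hYblock]; simp
          rcases H with ⟨x₁, hx₁, hf⟩ | ⟨y₁, hy₁, hf⟩ <;> rw [hf] at hmm <;>
            rcases mem_pair_elim hmm with h | h <;>
              simp only [Prod.mk.injEq] at h <;> omega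
        · -- t ≥ 2, δ ≥ 2 : descend to Bprop (t-1) (δ-1)
          have hB := (ihm (t-1) (δ-1) (by omega) (by omega) (by omega)).2
          refine hB qx (qy+1) q2x y₀ bq b2 hbq hb2 ?_ ?_ ?_ ?_ ?_ ?_ ?_ ?_ ?_
          · rw [hXblock]; simp
          · rw [hYblock]; simp
          · intro w hw
            rw [hXblock] at hw
            rcases mem_pair_elim hw with rfl | rfl
            · exact Or.inr ⟨by omega, by omega⟩
            · exact Or.inl rfl
          · intro w hw
            rw [hYblock] at hw
            rcases mem_pair_elim hw with rfl | rfl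
            · exact Or.inl rfl
            · exact Or.inr (pair_ext rfl (by omega))
          · omega
          · omega
          · omega
          · omega
          · omega
    · -- Bprop
      intro a b c e bx bw hbx hbw hxmem hwmem hEx hWw hE1 hE2 hIV hV hVI
      have hga := grid_of hT hbx hxmem
      have hgc := grid_of hT hbw hwmem
      simp only [Prod.fst, Prod.snd] at hga hgc
      have hc : c + δ = a + t := by omega
      have he : e = b + t + δ := by omega
      obtain ⟨rx, hrx⟩ : ∃ rx, rx + δ = a := ⟨a - δ, by omega⟩
      -- crossing r = (rx, b+δ), forced vertical {r, (rx+1, b+δ)}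
      obtain ⟨br, hbr, hrmem, F1⟩ := ray_NE hT δ rx b hδ bx hbx
        (by rw [hrx]; exact hxmem)
        (by intro w hw
            rcases hEx w hw with h | h
            · left; rw [hrx]; exact h
            · right; right; rw [hrx]; exact h)
        (by omega)
      obtain ⟨br', hbr', hrmem', F2⟩ := ray_NW hT t rx (b+δ) ht bw hbw
        (by have : (rx + t, b + δ + t) = (c, e) := by
              simp only [Prod.mk.injEq]; omega
            rw [this]; exact hwmem)
        (by intro w hw
            rcases hWw w hw with h | h
            · left; rw [h]; simp only [Prod.mk.injEq]; omega
            · right; right; rw [h]; simp only [Prod.mk.injEq]; omega)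
      have hbrr : br = br' := uniq hT hbr hbr' hrmem hrmem'
      have hXblock : br = {(rx, b+δ), (rx+1, b+δ)} := by
        rcases F2 with hf2 | hf2
        · exfalso
          rcases F1 with ⟨y₀, hy₀, hf1⟩ | hf1
          · have : (rx, b+δ+1) ∈ ({(rx, y₀), (rx, b+δ)} : Finset (ℕ × ℕ)) := by
              rw [← hf1, hbrr, hf2]; simp
            rcases mem_pair_elim this with h | h <;>
              simp only [Prod.mk.injEq] at h <;> omega
          · have : (rx, b+δ+1) ∈ ({(rx, b+δ), (rx+1, b+δ)} : Finset (ℕ × ℕ)) := by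
              rw [← hf1, hbrr, hf2]; simp
            rcases mem_pair_elim this with h | h <;>
              simp only [Prod.mk.injEq] at h <;> omega
        · rcases F1 with ⟨y₀, hy₀, hf1⟩ | hf1
          · exfalso
            have : (rx+1, b+δ) ∈ ({(rx, y₀), (rx, b+δ)} : Finset (ℕ × ℕ)) := by
              rw [← hf1, hbrr, hf2]; simp
            rcases mem_pair_elim this with h | h <;>
              simp only [Prod.mk.injEq] at h <;> omega
          · exact hf1
      -- crossing r₂ = (a+t, b+t), forced vertical {(a+t-1, b+t), r₂}
      obtain ⟨b2, hb2, hm2, G1⟩ := ray_SE hT t a b ht bx hbx hxmem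
        (by intro w hw
            rcases hEx w hw with h | h
            · left; exact h
            · right; right; exact h)
        (by omega) (by omega)
      obtain ⟨b2', hb2', hm2', G2⟩ := ray_SW hT δ c (b+t) hδ bw hbw
        (by have h : ((c : ℕ), b + t + δ) = (c, e) := pair_ext rfl (by omega)
            rw [h]; exact hwmem)
        (by intro w hw
            rcases hWw w hw with h | h
            · left; rw [h]; exact pair_ext rfl (by omega)
            · right; right; rw [h]; exact pair_ext rfl (by omega))
        (by omega)
      have hcd : c + δ = a + t := hc
      rw [hcd] at hm2' G2
      have hb22 : b2 = b2' := uniq hT hb2 hb2' hm2 hm2'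
      obtain ⟨x₀, hx₀, hYblock⟩ :
          ∃ x₀, x₀ + 1 = a + t ∧ b2 = {(x₀, b+t), (a+t, b+t)} := by
        rcases G1 with ⟨x₀, hx₀, hf1⟩ | ⟨y₀, hy₀, hf1⟩
        · exact ⟨x₀, hx₀, hf1⟩
        · exfalso
          rcases G2 with ⟨x₁, hx₁, hf2⟩ | hf2
          · have : (a+t, y₀) ∈ ({(x₁, b+t), (a+t, b+t)} : Finset (ℕ × ℕ)) := by
              rw [← hf2, ← hb22, hf1]; simp
            rcases mem_pair_elim this with h | h <;>
              simp only [Prod.mk.injEq] at h <;> omega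
          · have : (a+t, y₀) ∈ ({(a+t, b+t), (a+t, b+t+1)} : Finset (ℕ × ℕ)) := by
              rw [← hf2, ← hb22, hf1]; simp
            have hyy : y₀ + 1 = b + t := hy₀
            rcases mem_pair_elim this with h | h <;>
              simp only [Prod.mk.injEq] at h <;> omega
      by_cases ht1 : t = 1
      · by_cases hδ1 : δ = 1
        · -- t = δ = 1
          have hXm : (a, b+1) ∈ br := by
            rw [hXblock]; exact mem_pair_right (pair_ext (by omega) (by omega))
          have hYm : (a, b+1) ∈ b2 := by
            rw [hYblock]; exact mem_pair_left (pair_ext (by omega) (by omega))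
          have hbb : br = b2 := uniq hT hbr hb2 hXm hYm
          have hmm : (a+t, b+t) ∈ br := by rw [hbb, hYblock]; simp
          rw [hXblock] at hmm
          rcases mem_pair_elim hmm with h | h <;>
            simp only [Prod.mk.injEq] at h <;> omega
        · -- t = 1, δ ≥ 2 : NE-ray from Y' hits X'
          obtain ⟨δ', hde⟩ : ∃ δ', δ' + 1 = δ := ⟨δ - 1, by omega⟩
          have hδ' : 1 ≤ δ' := by omega
          obtain ⟨b5, hb5, hm5, H⟩ := ray_NE hT δ' (rx+1) (b+1) hδ' b2 hb2
            (by have h : ((rx + 1 + δ' : ℕ), (b + 1 : ℕ)) = (x₀, b+t) :=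
                  pair_ext (by omega) (by omega)
                rw [h, hYblock]; simp)
            (by intro w hw
                rw [hYblock] at hw
                rcases mem_pair_elim hw with rfl | rfl
                · exact Or.inl (pair_ext (by omega) (by omega))
                · exact Or.inr (Or.inl (pair_ext (by omega) (by omega))))
            (by omega)
          have htgt : ((rx + 1 : ℕ), b + 1 + δ') = (rx+1, b+δ) := pair_ext rfl (by omega)
          rw [htgt] at hm5 H
          have hXm : (rx+1, b+δ) ∈ br := by rw [hXblock]; simp
          have hbb : b5 = br := uniq hT hb5 hbr hm5 hXm
          have hmm : (rx, b+δ) ∈ b5 := by rw [hbb, hXblock]; simp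
          rcases H with ⟨y₁, hy₁, hf⟩ | hf <;> rw [hf] at hmm <;>
            rcases mem_pair_elim hmm with h | h <;>
              simp only [Prod.mk.injEq] at h <;> omega
      · by_cases hδ1 : δ = 1
        · -- δ = 1, t ≥ 2 : SE-ray from X' hits Y'
          obtain ⟨t', hte⟩ : ∃ t', t' + 1 = t := ⟨t - 1, by omega⟩
          have ht' : 1 ≤ t' := by omega
          have hXm : (a, b+1) ∈ br := by
            rw [hXblock]; exact mem_pair_right (pair_ext (by omega) (by omega))
          obtain ⟨b6, hb6, hm6, H⟩ := ray_SE hT t' a (b+1) ht' br hbr hXm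
            (by intro w hw
                rw [hXblock] at hw
                rcases mem_pair_elim hw with rfl | rfl
                · exact Or.inr (Or.inl ⟨by omega, by omega⟩)
                · exact Or.inl (pair_ext (by omega) (by omega)))
            (by omega) (by omega)
          have htgt : ((a + t' : ℕ), b + 1 + t') = (x₀, b+t) :=
            pair_ext (by omega) (by omega)
          rw [htgt] at hm6 H
          have hYm : (x₀, b+t) ∈ b2 := by rw [hYblock]; simp
          have hbb : b6 = b2 := uniq hT hb6 hb2 hm6 hYm
          have hmm : (a+t, b+t) ∈ b6 := by rw [hbb, hYblock]; simp
          rcases H with ⟨x₁, hx₁, hf⟩ | ⟨y₁, hy₁, hf⟩ <;> rw [hf] at hmm <;>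
            rcases mem_pair_elim hmm with h | h <;>
              simp only [Prod.mk.injEq] at h <;> omega
        · -- t ≥ 2, δ ≥ 2 : descend to Aprop (t-1) (δ-1)
          have hA := (ihm (t-1) (δ-1) (by omega) (by omega) (by omega)).1
          refine hA x₀ (b+t) (rx+1) (b+δ) b2 br hb2 hbr ?_ ?_ ?_ ?_ ?_ ?_ ?_ ?_
          · rw [hYblock]; simp
          · rw [hXblock]; simp
          · intro w hw
            rw [hYblock] at hw
            rcases mem_pair_elim hw with rfl | rfl
            · exact Or.inl rfl
            · exact Or.inr (pair_ext (by omega) rfl)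
          · intro w hw
            rw [hXblock] at hw
            rcases mem_pair_elim hw with rfl | rfl
            · exact Or.inr ⟨by omega, by omega⟩
            · exact Or.inl rfl
          · omega
          · omega
          · omega
          · omega


lemma mono_NW_kill (hT : IsTatami n n T) {x y s : ℕ} (hs : 1 ≤ s)
    (h1 : ({((x : ℕ), (y : ℕ))} : Finset (ℕ × ℕ)) ∈ T)
    (h2 : ({((x+s : ℕ), (y+s : ℕ))} : Finset (ℕ × ℕ)) ∈ T) : False := by
  obtain ⟨b', hb', hmem, hforms⟩ := ray_NW hT s x y hs _ h2 (by simp)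
    (by intro w hw; simp only [Finset.mem_singleton] at hw; exact Or.inl hw)
  have hbb : b' = {(x, y)} := uniq hT hb' h1 hmem (by simp)
  rcases hforms with hf | hf <;> rw [hbb] at hf
  · have h3 : ((x : ℕ), y+1) ∈ ({((x:ℕ),(y:ℕ))} : Finset (ℕ × ℕ)) := by rw [hf]; simp
    simp only [Finset.mem_singleton, Prod.mk.injEq] at h3; omega
  · have h3 : ((x+1 : ℕ), y) ∈ ({((x:ℕ),(y:ℕ))} : Finset (ℕ × ℕ)) := by rw [hf]; simp
    simp only [Finset.mem_singleton, Prod.mk.injEq] at h3; omega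

lemma mono_SW_kill (hT : IsTatami n n T) {x y s : ℕ} (hs : 1 ≤ s)
    (hup : ({((x : ℕ), (y+s : ℕ))} : Finset (ℕ × ℕ)) ∈ T)
    (hdown : ({((x+s : ℕ), (y : ℕ))} : Finset (ℕ × ℕ)) ∈ T) : False := by
  have hg := grid_of hT hdown (Finset.mem_singleton_self _)
  obtain ⟨b', hb', hmem, hforms⟩ := ray_SW hT s x y hs _ hup (by simp)
    (by intro w hw; simp only [Finset.mem_singleton] at hw; exact Or.inl hw)
    (by omega)
  have hbb : b' = {(x+s, y)} := uniq hT hb' hdown hmem (by simp)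
  rcases hforms with ⟨x₀, hx₀, hf⟩ | hf <;> rw [hbb] at hf
  · have h3 : ((x₀ : ℕ), y) ∈ ({((x+s:ℕ),(y:ℕ))} : Finset (ℕ × ℕ)) := by rw [hf]; simp
    simp only [Finset.mem_singleton, Prod.mk.injEq] at h3; omega
  · have h3 : ((x+s : ℕ), y+1) ∈ ({((x+s:ℕ),(y:ℕ))} : Finset (ℕ × ℕ)) := by rw [hf]; simp
    simp only [Finset.mem_singleton, Prod.mk.injEq] at h3; omega

lemma mono_same_v (hT : IsTatami n n T) {i j i' j' : ℕ}
    (h1 : ({((i : ℕ), (j : ℕ))} : Finset (ℕ × ℕ)) ∈ T)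
    (h2 : ({((i' : ℕ), (j' : ℕ))} : Finset (ℕ × ℕ)) ∈ T)
    (hv : i + j' = i' + j) (hne : ¬(i = i' ∧ j = j')) : False := by
  rcases Nat.lt_trichotomy i i' with h | h | h
  · obtain ⟨s, hs1⟩ : ∃ s, i + s = i' := ⟨i' - i, by omega⟩
    have hs : 1 ≤ s := by omega
    have he : ((i' : ℕ), (j' : ℕ)) = (i + s, j + s) := pair_ext (by omega) (by omega)
    rw [he] at h2
    exact mono_NW_kill hT hs h1 h2
  · exact hne ⟨h, by omega⟩
  · obtain ⟨s, hs1⟩ : ∃ s, i' + s = i := ⟨i - i', by omega⟩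
    have hs : 1 ≤ s := by omega
    have he : ((i : ℕ), (j : ℕ)) = (i' + s, j' + s) := pair_ext (by omega) (by omega)
    rw [he] at h1
    exact mono_NW_kill hT hs h2 h1

lemma mono_same_u (hT : IsTatami n n T) {i j i' j' : ℕ}
    (h1 : ({((i : ℕ), (j : ℕ))} : Finset (ℕ × ℕ)) ∈ T)
    (h2 : ({((i' : ℕ), (j' : ℕ))} : Finset (ℕ × ℕ)) ∈ T)
    (hu : i + j = i' + j') (hne : ¬(i = i' ∧ j = j')) : False := by
  rcases Nat.lt_trichotomy i i' with h | h | h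
  · obtain ⟨s, hs1⟩ : ∃ s, i + s = i' := ⟨i' - i, by omega⟩
    have hs : 1 ≤ s := by omega
    have heup : ((i : ℕ), (j : ℕ)) = (i, j' + s) := pair_ext rfl (by omega)
    have hedn : ((i' : ℕ), (j' : ℕ)) = (i + s, j') := pair_ext (by omega) rfl
    rw [heup] at h1; rw [hedn] at h2
    exact mono_SW_kill hT hs h1 h2
  · exact hne ⟨h, by omega⟩
  · obtain ⟨s, hs1⟩ : ∃ s, i' + s = i := ⟨i - i', by omega⟩
    have hs : 1 ≤ s := by omega
    have heup : ((i' : ℕ), (j' : ℕ)) = (i', j + s) := pair_ext rfl (by omega)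
    have hedn : ((i : ℕ), (j : ℕ)) = (i' + s, j) := pair_ext (by omega) rfl
    rw [heup] at h2; rw [hedn] at h1
    exact mono_SW_kill hT hs h2 h1

lemma mono_opp (hT : IsTatami n n T) {i j i' j' d : ℕ} (hd : 1 ≤ d)
    (hi : j + d = i) (hj : i' + d = j')
    (h1 : ({((i : ℕ), (j : ℕ))} : Finset (ℕ × ℕ)) ∈ T)
    (h2 : ({((i' : ℕ), (j' : ℕ))} : Finset (ℕ × ℕ)) ∈ T) : False := by
  have hg1 := grid_of hT h1 (Finset.mem_singleton_self _)
  have hg2 := grid_of hT h2 (Finset.mem_singleton_self _)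
  rcases Nat.lt_trichotomy (i + j) (i' + j') with h | h | h
  · -- u(M) < u(M') : use Bprop
    obtain ⟨t, htEq⟩ : ∃ t, i + j + 2*t = i' + j' := ⟨i' - j, by omega⟩
    have ht : 1 ≤ t := by omega
    exact (noAB hT (t + d) t d ht hd le_rfl).2 i j i' j' _ _ h1 h2
      (by simp) (by simp)
      (by intro w hw; simp only [Finset.mem_singleton] at hw; exact Or.inl hw)
      (by intro w hw; simp only [Finset.mem_singleton] at hw; exact Or.inl hw)
      (by omega) (by omega) (by omega) (by omega) (by omega)
  · -- u equal : SW kill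
    have heup : ((i' : ℕ), (j' : ℕ)) = (j, j + d) := pair_ext (by omega) (by omega)
    have hedn : ((i : ℕ), (j : ℕ)) = (j + d, j) := pair_ext (by omega) rfl
    rw [heup] at h2; rw [hedn] at h1
    exact mono_SW_kill hT hd h2 h1
  · -- u(M) > u(M') : use Aprop
    obtain ⟨t, htEq⟩ : ∃ t, i' + j' + 2*t = i + j := ⟨j - i', by omega⟩
    have ht : 1 ≤ t := by omega
    exact (noAB hT (t + d) t d ht hd le_rfl).1 i j i' j' _ _ h1 h2
      (by simp) (by simp)
      (by intro w hw; simp only [Finset.mem_singleton] at hw; exact Or.inl hw)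
      (by intro w hw; simp only [Finset.mem_singleton] at hw; exact Or.inl hw)
      (by omega) (by omega) (by omega) (by omega)

end TatamiProof

open TatamiProof in
theorem tatami_monomino_upper_bound' (n : ℕ) (hn : 0 < n)
    (T : Finset (Finset (ℕ × ℕ))) (hT : IsTatami n n T)
    [DecidablePred IsMonomino] :
    (T.filter IsMonomino).card ≤ n := by
  have hrange := Finset.card_range n
  refine le_trans (Finset.card_le_card_of_injOn
    (fun b => b.sup (fun p => p.1 - p.2) + b.sup (fun p => p.2 - p.1)) ?_ ?_)
    (le_of_eq hrange)
  · intro b hb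
    rw [Finset.mem_coe, Finset.mem_filter] at hb
    obtain ⟨i, j, rfl⟩ := hb.2
    have hg := grid_of hT hb.1 (Finset.mem_singleton_self (i, j))
    simp only [Finset.sup_singleton, Finset.mem_coe, Finset.mem_range]
    omega
  · intro b hb b' hb' hf
    simp only [Finset.coe_filter, Set.mem_setOf_eq, Finset.mem_coe] at hb hb'
    have hbT := hb.1
    have hbT' := hb'.1
    obtain ⟨i, j, rfl⟩ := hb.2
    obtain ⟨i', j', rfl⟩ := hb'.2
    simp only [Finset.sup_singleton] at hf
    by_contra hne
    have hcne : ¬(i = i' ∧ j = j') := by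
      rintro ⟨rfl, rfl⟩; exact hne rfl
    have hf' : (i - j) + (j - i) = (i' - j') + (j' - i') := hf
    rcases Nat.lt_trichotomy i j with hij | hij | hij <;>
      rcases Nat.lt_trichotomy i' j' with hij' | hij' | hij'
    · exact mono_same_v hT hbT hbT' (by omega) hcne
    · omega
    · exact mono_opp hT (d := j - i) (by omega) (by omega) (by omega) hbT' hbT
    · omega
    · exact mono_same_v hT hbT hbT' (by omega) hcne
    · omega
    · exact mono_opp hT (d := i - j) (by omega) (by omega) (by omega) hbT hbT'
    · omega
    · exact mono_same_v hT hbT hbT' (by omega) hcne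

theorem tatami_monomino_upper_bound (n : ℕ) (hn : 0 < n)
    (T : Finset (Finset (ℕ × ℕ))) (hT : IsTatami n n T) :
    monoCount T ≤ n := by
  unfold monoCount
  exact @tatami_monomino_upper_bound' n hn T hT
    (fun b => Classical.propDecidable (IsMonomino b))
end

section
/- For every positive integer n, there exists a tatami covering of the n×n grid that contains exactly n monominoes. -/
/-- The block containing cell `p` in our explicit covering of the `n × n` grid:
cells `(i,j)` with `i+j` even pair with `(i+1,j)` (if it exists), cells with
`i+j` odd pair with `(i-1,j)` (if it exists); others are monominoes. -/
def tatBlk (n : ℕ) (p : ℕ × ℕ) : Finset (ℕ × ℕ) :=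
  if (p.1 + p.2) % 2 = 0 then
    if p.1 + 1 < n then {(p.1, p.2), (p.1 + 1, p.2)} else {(p.1, p.2)}
  else
    if p.1 = 0 then {(0, p.2)} else {(p.1 - 1, p.2), (p.1, p.2)}

lemma tatBlk_mem_self (n : ℕ) (p : ℕ × ℕ) : p ∈ tatBlk n p := by
  obtain ⟨i, j⟩ := p
  unfold tatBlk
  split_ifs with h0 h1 h2 <;> simp_all

lemma tatBlk_spec (n : ℕ) {i j : ℕ} (hi : i < n) (hj : j < n) :
    ∀ q ∈ tatBlk n (i, j), q.1 < n ∧ q.2 < n ∧ tatBlk n q = tatBlk n (i, j) := by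
  intro q hq
  by_cases h0 : (i + j) % 2 = 0
  · by_cases h1 : i + 1 < n
    · have hb : tatBlk n (i, j) = {(i, j), (i + 1, j)} := by simp [tatBlk, h0, h1]
      rw [hb] at hq
      simp only [Finset.mem_insert, Finset.mem_singleton] at hq
      rcases hq with rfl | rfl
      · exact ⟨hi, hj, rfl⟩
      · refine ⟨h1, hj, ?_⟩
        rw [hb]
        have h2 : ¬ ((i + 1 + j) % 2 = 0) := by omega
        have h3 : ¬ (i + 1 = 0) := by omega
        simp [tatBlk, h2, h3]
    · have hb : tatBlk n (i, j) = {(i, j)} := by simp [tatBlk, h0, h1]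
      rw [hb] at hq
      simp only [Finset.mem_singleton] at hq
      subst hq
      exact ⟨hi, hj, rfl⟩
  · by_cases h2 : i = 0
    · subst h2
      have hb : tatBlk n (0, j) = {(0, j)} := by
        have h0' : ¬ (j % 2 = 0) := by omega
        simp [tatBlk, h0']
      rw [hb] at hq
      simp only [Finset.mem_singleton] at hq
      subst hq
      exact ⟨hi, hj, rfl⟩
    · have hb : tatBlk n (i, j) = {(i - 1, j), (i, j)} := by simp [tatBlk, h0, h2]
      rw [hb] at hq
      simp only [Finset.mem_insert, Finset.mem_singleton] at hq
      rcases hq with rfl | rfl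
      · refine ⟨by omega, hj, ?_⟩
        rw [hb]
        have h3 : (i - 1 + j) % 2 = 0 := by omega
        have h4 : i - 1 + 1 < n := by omega
        have h5 : i - 1 + 1 = i := by omega
        simp [tatBlk, h3, h4, h5, hi]
      · exact ⟨hi, hj, rfl⟩

/-- Our covering: the set of all blocks of cells in the grid. -/
def tatT (n : ℕ) : Finset (Finset (ℕ × ℕ)) :=
  ((Finset.range n) ×ˢ (Finset.range n)).image (tatBlk n)

lemma mem_tatT {n : ℕ} {b : Finset (ℕ × ℕ)} :
    b ∈ tatT n ↔ ∃ p : ℕ × ℕ, p.1 < n ∧ p.2 < n ∧ tatBlk n p = b := by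
  simp only [tatT, Finset.mem_image, Finset.mem_product, Finset.mem_range]
  constructor
  · rintro ⟨p, ⟨h1, h2⟩, h3⟩; exact ⟨p, h1, h2, h3⟩
  · rintro ⟨p, h1, h2, h3⟩; exact ⟨p, ⟨h1, h2⟩, h3⟩

lemma tatT_blk {n : ℕ} {b : Finset (ℕ × ℕ)} (hb : b ∈ tatT n) {q : ℕ × ℕ}
    (hq : q ∈ b) : q.1 < n ∧ q.2 < n ∧ tatBlk n q = b := by
  rw [mem_tatT] at hb
  obtain ⟨⟨i, j⟩, h1, h2, h3⟩ := hb
  subst h3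
  exact tatBlk_spec n h1 h2 q hq

lemma tatT_isTatami (n : ℕ) : IsTatami n n (tatT n) := by
  refine ⟨?_, ?_, ?_, ?_⟩
  · -- shapes
    intro b hb
    rw [mem_tatT] at hb
    obtain ⟨⟨i, j⟩, h1, h2, h3⟩ := hb
    subst h3
    unfold tatBlk
    split_ifs with ha hb' hc
    · exact Or.inr (Or.inr ⟨i, j, rfl⟩)
    · exact Or.inl ⟨i, j, rfl⟩
    · exact Or.inl ⟨0, j, rfl⟩
    · refine Or.inr (Or.inr ⟨i - 1, j, ?_⟩)
      have : i - 1 + 1 = i := by omega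
      rw [this]
  · -- disjoint
    intro b hb c hc hne
    rw [Finset.disjoint_left]
    intro q hqb hqc
    have h1 := (tatT_blk hb hqb).2.2
    have h2 := (tatT_blk hc hqc).2.2
    exact hne (h1 ▸ h2 ▸ rfl)
  · -- covering
    intro p
    constructor
    · rintro ⟨h1, h2⟩
      refine ⟨tatBlk n p, ?_, tatBlk_mem_self n p⟩
      rw [mem_tatT]
      exact ⟨p, h1, h2, rfl⟩
    · rintro ⟨b, hb, hp⟩
      obtain ⟨h1, h2, -⟩ := tatT_blk hb hp
      exact ⟨h1, h2⟩
  · -- no four corners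
    intro i j b₁ hb₁ b₂ hb₂ b₃ hb₃ b₄ hb₄ m₁ m₂ m₃ m₄
    obtain ⟨hi1, hj, e₁⟩ := tatT_blk hb₁ m₁
    obtain ⟨hi, -, e₂⟩ := tatT_blk hb₂ m₂
    obtain ⟨-, hj1, e₃⟩ := tatT_blk hb₃ m₃
    obtain ⟨-, -, e₄⟩ := tatT_blk hb₄ m₄
    simp only at hi hj1
    rintro ⟨h12, -, -, -, -, h34⟩
    by_cases h0 : (i + j) % 2 = 0
    · apply h12
      rw [← e₁, ← e₂]
      have ha : ¬ ((i + 1 + j) % 2 = 0) := by omega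
      have hb' : ¬ (i + 1 = 0) := by omega
      simp [tatBlk, h0, hi, ha, hb']
    · apply h34
      rw [← e₃, ← e₄]
      have ha : (i + (j + 1)) % 2 = 0 := by omega
      have hb' : ¬ ((i + 1 + (j + 1)) % 2 = 0) := by omega
      have hc : ¬ (i + 1 = 0) := by omega
      have hd : i + 1 - 1 = i := by omega
      simp [tatBlk, ha, hi, hb', hc, hd]

/-- Enumeration of the monominoes of `tatT n`. -/
def tatF (n : ℕ) (k : ℕ) : Finset (ℕ × ℕ) :=
  if k % 2 = 1 then {(0, k)} else {(n - 1, n - 1 - k)}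

lemma tatF_mem {n : ℕ} (hn : 0 < n) {k : ℕ} (hk : k < n) :
    tatF n k ∈ tatT n ∧ IsMonomino (tatF n k) := by
  unfold tatF
  by_cases h : k % 2 = 1
  · rw [if_pos h]
    constructor
    · rw [mem_tatT]
      refine ⟨(0, k), hn, hk, ?_⟩
      have h0 : ¬ (k % 2 = 0) := by omega
      simp [tatBlk, h0]
    · exact ⟨0, k, rfl⟩
  · rw [if_neg h]
    constructor
    · rw [mem_tatT]
      refine ⟨(n - 1, n - 1 - k), by omega, by omega, ?_⟩
      have h0 : (n - 1 + (n - 1 - k)) % 2 = 0 := by omega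
      have h1 : ¬ (n - 1 + 1 < n) := by omega
      simp [tatBlk, h0, h1]
    · exact ⟨n - 1, n - 1 - k, rfl⟩

lemma tatT_filter_mono (n : ℕ) (hn : 0 < n) [DecidablePred IsMonomino] :
    (tatT n).filter IsMonomino = (Finset.range n).image (tatF n) := by
  ext b
  simp only [Finset.mem_filter, Finset.mem_image, Finset.mem_range]
  constructor
  · rintro ⟨hb, i, j, rfl⟩
    have hmem : ((i, j) : ℕ × ℕ) ∈ ({(i, j)} : Finset (ℕ × ℕ)) := by simp
    obtain ⟨hi, hj, he⟩ := tatT_blk hb hmem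
    simp only at hi hj
    by_cases h0 : (i + j) % 2 = 0
    · by_cases h1 : i + 1 < n
      · exfalso
        have hb' : tatBlk n (i, j) = {(i, j), (i + 1, j)} := by simp [tatBlk, h0, h1]
        rw [hb'] at he
        have : ((i + 1, j) : ℕ × ℕ) ∈ ({(i, j)} : Finset (ℕ × ℕ)) := by
          rw [← he]; simp
        simp only [Finset.mem_singleton, Prod.mk.injEq] at this
        omega
      · refine ⟨n - 1 - j, by omega, ?_⟩
        have h2 : ¬ ((n - 1 - j) % 2 = 1) := by omega
        have h3 : n - 1 - (n - 1 - j) = j := by omega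
        have h4 : i = n - 1 := by omega
        simp [tatF, h2, h3, h4]
    · by_cases h2 : i = 0
      · subst h2
        refine ⟨j, hj, ?_⟩
        have h3 : j % 2 = 1 := by omega
        simp [tatF, h3]
      · exfalso
        have hb' : tatBlk n (i, j) = {(i - 1, j), (i, j)} := by simp [tatBlk, h0, h2]
        rw [hb'] at he
        have : ((i - 1, j) : ℕ × ℕ) ∈ ({(i, j)} : Finset (ℕ × ℕ)) := by
          rw [← he]; simp
        simp only [Finset.mem_singleton, Prod.mk.injEq] at this
        omega
  · rintro ⟨k, hk, rfl⟩
    obtain ⟨h1, h2⟩ := tatF_mem hn hk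
    exact ⟨h1, h2⟩

lemma tatF_injOn (n : ℕ) : Set.InjOn (tatF n) (Finset.range n) := by
  intro k hk l hl h
  simp only [Finset.coe_range, Set.mem_Iio] at hk hl
  unfold tatF at h
  by_cases h1 : k % 2 = 1 <;> by_cases h2 : l % 2 = 1 <;>
    simp only [h1, h2, if_pos, if_neg, if_true, if_false] at h <;>
    (rw [Finset.singleton_inj, Prod.mk.injEq] at h; omega)

theorem tatami_monomino_max_attained (n : ℕ) (hn : 0 < n) :
    ∃ T : Finset (Finset (ℕ × ℕ)), IsTatami n n T ∧ monoCount T = n := by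
  classical
  refine ⟨tatT n, tatT_isTatami n, ?_⟩
  unfold monoCount
  rw [tatT_filter_mono n hn, Finset.card_image_of_injOn (tatF_injOn n),
    Finset.card_range]
end

section
/- There is no tatami covering of the 10×13 grid all of whose blocks are dominoes (that is, the 10×13 grid admits no monomino-free tatami covering). -/
/-! ### Auxiliary development: a verified exhaustive search.

We encode a domino-only tatami covering of the 10×13 grid as a function
assigning to each cell a direction (0 = L, 1 = R, 2 = U, 3 = D) pointing to
the other cell of its domino.  Cells are enumerated in column-major order:
cell `(i, j)` has index `p = 10 * j + i`.  A depth-first search shows that no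
direction assignment satisfies all local constraints. -/

/-- Local constraints when cell `p` gets direction `v`, given the window `w`
encoding the previous 10 cells' directions in base 4 (most recent cell in the
lowest digit). -/
def TatamiAllowed (p v w : ℕ) : Prop :=
  (v = 0 → 10 ≤ p ∧ w / 262144 % 4 = 1) ∧
  (10 ≤ p → w / 262144 % 4 = 1 → v = 0) ∧
  (v = 2 → p % 10 ≠ 0 ∧ w % 4 = 3) ∧
  (p % 10 ≠ 0 → w % 4 = 3 → v = 2) ∧
  (v = 3 → p % 10 ≠ 9) ∧
  (v = 1 → p < 120) ∧
  (p % 10 ≠ 9 → 10 ≤ p →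
    (w / 262144 % 4 = 1 ∨ w / 262144 % 4 = 3 ∨ w / 65536 % 4 = 1 ∨ v = 3))

instance (p v w : ℕ) : Decidable (TatamiAllowed p v w) := by
  unfold TatamiAllowed; infer_instance

/-- Depth-first search for a direction assignment on the 10×13 grid. -/
def tatamiGo : ℕ → ℕ → ℕ → Bool
  | 0, _, _ => true
  | fuel+1, p, w =>
      ([0, 1, 2, 3] : List ℕ).any fun v =>
        decide (TatamiAllowed p v w) && tatamiGo fuel (p+1) (w * 4 + v)

set_option maxRecDepth 100000 in
set_option maxHeartbeats 4000000 in
lemma tatamiGo_false : tatamiGo 130 0 0 = false := by decide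

/-- The window of the last (up to 10) values of `g` before position `p`. -/
def tatamiW (g : ℕ → ℕ) : ℕ → ℕ
  | 0 => 0
  | p+1 => tatamiW g p * 4 + g p

lemma tatamiW_digit (g : ℕ → ℕ) (hg : ∀ q, g q < 4) :
    ∀ p k, k < p → tatamiW g p / 4 ^ k % 4 = g (p - 1 - k) := by
  intro p
  induction p with
  | zero => omega
  | succ p ih =>
    intro k hk
    cases k with
    | zero =>
      have := hg p
      simp only [tatamiW, pow_zero, Nat.div_one]
      rw [show p + 1 - 1 - 0 = p from by omega]
      omega
    | succ k =>
      have h1 : tatamiW g (p+1) / 4 = tatamiW g p := by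
        show (tatamiW g p * 4 + g p) / 4 = _
        have := hg p
        omega
      have h4 : tatamiW g (p+1) / 4 ^ (k+1) = tatamiW g p / 4 ^ k := by
        rw [pow_succ', ← Nat.div_div_eq_div_mul, h1]
      rw [h4, ih k (by omega)]
      congr 1
      omega

lemma tatamiGo_complete (g : ℕ → ℕ) (hg : ∀ q, g q < 4)
    (H1 : ∀ p < 130, g p = 0 → 10 ≤ p ∧ g (p-10) = 1)
    (H1' : ∀ p < 130, 10 ≤ p → g (p-10) = 1 → g p = 0)
    (H2 : ∀ p < 130, g p = 2 → p % 10 ≠ 0 ∧ g (p-1) = 3)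
    (H2' : ∀ p < 130, p % 10 ≠ 0 → g (p-1) = 3 → g p = 2)
    (H3 : ∀ p < 130, g p = 3 → p % 10 ≠ 9)
    (H4 : ∀ p < 130, g p = 1 → p < 120)
    (H5 : ∀ p < 130, p % 10 ≠ 9 → 10 ≤ p →
      (g (p-10) = 1 ∨ g (p-10) = 3 ∨ g (p-9) = 1 ∨ g p = 3)) :
    ∀ fuel p, fuel + p = 130 → tatamiGo fuel p (tatamiW g p) = true := by
  intro fuel
  induction fuel with
  | zero => intro p _; rfl
  | succ fuel ih =>
    intro p hp
    have hp130 : p < 130 := by omega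
    have hv4 : g p < 4 := hg p
    show List.any _ _ = true
    rw [List.any_eq_true]
    refine ⟨g p, by simp; omega, ?_⟩
    rw [Bool.and_eq_true, decide_eq_true_eq]
    constructor
    · have e0 : 1 ≤ p → tatamiW g p % 4 = g (p-1) := fun h => by
        have := tatamiW_digit g hg p 0 (by omega)
        simpa using this
      have e9 : 10 ≤ p → tatamiW g p / 262144 % 4 = g (p-10) := fun h => by
        have h9 := tatamiW_digit g hg p 9 (by omega)
        have e : p - 1 - 9 = p - 10 := by omega
        rw [e] at h9
        simpa using h9
      have e8 : 10 ≤ p → tatamiW g p / 65536 % 4 = g (p-9) := fun h => by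
        have h8 := tatamiW_digit g hg p 8 (by omega)
        have e : p - 1 - 8 = p - 9 := by omega
        rw [e] at h8
        simpa using h8
      refine ⟨?_, ?_, ?_, ?_, H3 p hp130, H4 p hp130, ?_⟩
      · intro h0
        obtain ⟨h10, hL⟩ := H1 p hp130 h0
        exact ⟨h10, by rw [e9 h10]; exact hL⟩
      · intro h10 hL
        rw [e9 h10] at hL
        exact H1' p hp130 h10 hL
      · intro h2
        obtain ⟨hi, hU⟩ := H2 p hp130 h2
        exact ⟨hi, by rw [e0 (by omega)]; exact hU⟩
      · intro hi hU
        rw [e0 (by omega)] at hU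
        exact H2' p hp130 hi hU
      · intro hi h10
        rw [e9 h10, e8 h10]
        exact H5 p hp130 hi h10
    · exact ih (p+1) (by omega)

open Classical in
/-- The direction of cell `p` within its block `b`: 0 = L, 1 = R, 2 = U, 3 = D. -/
noncomputable def tatamiDir (b : Finset (ℕ × ℕ)) (p : ℕ × ℕ) : ℕ :=
  if ∃ i j : ℕ, b = {(i, j), (i, j+1)} ∧ p = (i, j) then 1
  else if ∃ i j : ℕ, b = {(i, j), (i, j+1)} ∧ p = (i, j+1) then 0
  else if ∃ i j : ℕ, b = {(i, j), (i+1, j)} ∧ p = (i, j) then 3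
  else 2

lemma pair_mem_cases {x a b : ℕ × ℕ} (h : x ∈ ({a, b} : Finset (ℕ × ℕ))) :
    x = a ∨ x = b := by
  simpa using h

/-- An H-domino is never equal to a V-domino. -/
lemma H_ne_V {i j r c : ℕ} :
    ({(i, j), (i, j+1)} : Finset (ℕ × ℕ)) ≠ {(r, c), (r+1, c)} := by
  intro h
  have h1 : ((i, j) : ℕ × ℕ) ∈ ({(r, c), (r+1, c)} : Finset (ℕ × ℕ)) := by
    rw [← h]; simp
  have h2 : ((i, j+1) : ℕ × ℕ) ∈ ({(r, c), (r+1, c)} : Finset (ℕ × ℕ)) := by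
    rw [← h]; simp
  rcases pair_mem_cases h1 with h1 | h1 <;> rcases pair_mem_cases h2 with h2 | h2 <;>
    simp only [Prod.mk.injEq] at h1 h2 <;> omega

lemma H_eq_H {i j r c : ℕ}
    (h : ({(i, j), (i, j+1)} : Finset (ℕ × ℕ)) = {(r, c), (r, c+1)}) :
    i = r ∧ j = c := by
  have h1 : ((i, j) : ℕ × ℕ) ∈ ({(r, c), (r, c+1)} : Finset (ℕ × ℕ)) := by
    rw [← h]; simp
  have h2 : ((i, j+1) : ℕ × ℕ) ∈ ({(r, c), (r, c+1)} : Finset (ℕ × ℕ)) := by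
    rw [← h]; simp
  rcases pair_mem_cases h1 with h1 | h1 <;> rcases pair_mem_cases h2 with h2 | h2 <;>
    simp only [Prod.mk.injEq] at h1 h2 <;> omega

lemma V_eq_V {i j r c : ℕ}
    (h : ({(i, j), (i+1, j)} : Finset (ℕ × ℕ)) = {(r, c), (r+1, c)}) :
    i = r ∧ j = c := by
  have h1 : ((i, j) : ℕ × ℕ) ∈ ({(r, c), (r+1, c)} : Finset (ℕ × ℕ)) := by
    rw [← h]; simp
  have h2 : ((i+1, j) : ℕ × ℕ) ∈ ({(r, c), (r+1, c)} : Finset (ℕ × ℕ)) := by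
    rw [← h]; simp
  rcases pair_mem_cases h1 with h1 | h1 <;> rcases pair_mem_cases h2 with h2 | h2 <;>
    simp only [Prod.mk.injEq] at h1 h2 <;> omega

lemma tatamiDir_H_left (i j : ℕ) : tatamiDir {(i, j), (i, j+1)} (i, j) = 1 := by
  rw [tatamiDir, if_pos ⟨i, j, rfl, rfl⟩]

lemma tatamiDir_H_right (i j : ℕ) : tatamiDir {(i, j), (i, j+1)} (i, j+1) = 0 := by
  rw [tatamiDir, if_neg, if_pos ⟨i, j, rfl, rfl⟩]
  rintro ⟨r, c, hb, hp⟩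
  obtain ⟨hi, hj⟩ := H_eq_H hb
  simp only [Prod.mk.injEq] at hp
  omega

lemma tatamiDir_V_top (i j : ℕ) : tatamiDir {(i, j), (i+1, j)} (i, j) = 3 := by
  rw [tatamiDir, if_neg, if_neg, if_pos ⟨i, j, rfl, rfl⟩]
  · rintro ⟨r, c, hb, -⟩; exact H_ne_V hb.symm
  · rintro ⟨r, c, hb, -⟩; exact H_ne_V hb.symm

lemma tatamiDir_V_bot (i j : ℕ) : tatamiDir {(i, j), (i+1, j)} (i+1, j) = 2 := by
  rw [tatamiDir, if_neg, if_neg, if_neg]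
  · rintro ⟨r, c, hb, hp⟩
    obtain ⟨hi, hj⟩ := V_eq_V hb
    simp only [Prod.mk.injEq] at hp
    omega
  · rintro ⟨r, c, hb, -⟩; exact H_ne_V hb.symm
  · rintro ⟨r, c, hb, -⟩; exact H_ne_V hb.symm

lemma tatamiDir_lt_4 (b : Finset (ℕ × ℕ)) (p : ℕ × ℕ) : tatamiDir b p < 4 := by
  rw [tatamiDir]
  split
  · omega
  split
  · omega
  split <;> omega

/-- A domino containing two horizontally adjacent cells is that H-domino. -/
lemma block_of_right {b : Finset (ℕ × ℕ)} (hb : IsHDomino b ∨ IsVDomino b)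
    {i j : ℕ} (hp : (i, j) ∈ b) (hq : (i, j+1) ∈ b) :
    b = {(i, j), (i, j+1)} := by
  rcases hb with ⟨r, c, rfl⟩ | ⟨r, c, rfl⟩
  · rcases pair_mem_cases hp with h | h <;> rcases pair_mem_cases hq with h' | h' <;>
      simp only [Prod.mk.injEq] at h h'
    · exact absurd rfl (by omega : ¬ (1 : ℕ) = 1)
    · obtain ⟨rfl, rfl⟩ : i = r ∧ j = c := by omega
      rfl
    · exact absurd rfl (by omega : ¬ (1 : ℕ) = 1)
    · exact absurd rfl (by omega : ¬ (1 : ℕ) = 1)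
  · exfalso
    rcases pair_mem_cases hp with h | h <;> rcases pair_mem_cases hq with h' | h' <;>
      simp only [Prod.mk.injEq] at h h' <;> omega

/-- A domino containing two vertically adjacent cells is that V-domino. -/
lemma block_of_below {b : Finset (ℕ × ℕ)} (hb : IsHDomino b ∨ IsVDomino b)
    {i j : ℕ} (hp : (i, j) ∈ b) (hq : (i+1, j) ∈ b) :
    b = {(i, j), (i+1, j)} := by
  rcases hb with ⟨r, c, rfl⟩ | ⟨r, c, rfl⟩
  · exfalso
    rcases pair_mem_cases hp with h | h <;> rcases pair_mem_cases hq with h' | h' <;>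
      simp only [Prod.mk.injEq] at h h' <;> omega
  · rcases pair_mem_cases hp with h | h <;> rcases pair_mem_cases hq with h' | h' <;>
      simp only [Prod.mk.injEq] at h h'
    · exact absurd rfl (by omega : ¬ (1 : ℕ) = 1)
    · obtain ⟨rfl, rfl⟩ : i = r ∧ j = c := by omega
      rfl
    · exact absurd rfl (by omega : ¬ (1 : ℕ) = 1)
    · exact absurd rfl (by omega : ¬ (1 : ℕ) = 1)

/-- No domino contains two diagonally adjacent cells. -/
lemma block_not_diag {b : Finset (ℕ × ℕ)} (hb : IsHDomino b ∨ IsVDomino b)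
    {i j i' j' : ℕ} (hii : i ≠ i') (hjj : j ≠ j')
    (hp : (i, j) ∈ b) (hq : (i', j') ∈ b) : False := by
  rcases hb with ⟨r, c, rfl⟩ | ⟨r, c, rfl⟩ <;>
    rcases pair_mem_cases hp with h | h <;> rcases pair_mem_cases hq with h' | h' <;>
      simp only [Prod.mk.injEq] at h h' <;> omega

theorem no_domino_tatami_10_13 :
    ¬ ∃ T : Finset (Finset (ℕ × ℕ)),
        IsTatami 10 13 T ∧ ∀ b ∈ T, IsHDomino b ∨ IsVDomino b := by
  rintro ⟨T, ⟨-, hdisj, hcov, htat⟩, hdom⟩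
  classical
  have hmem : ∀ b ∈ T, ∀ p ∈ b, p.1 < 10 ∧ p.2 < 13 := by
    intro b hb p hp
    exact (hcov p).2 ⟨b, hb, hp⟩
  have huniq : ∀ b ∈ T, ∀ c ∈ T, ∀ p : ℕ × ℕ, p ∈ b → p ∈ c → b = c := by
    intro b hb c hc p hpb hpc
    by_contra hne
    exact (Finset.disjoint_left.1 (hdisj b hb c hc hne)) hpb hpc
  have hex : ∀ p : ℕ × ℕ, p.1 < 10 → p.2 < 13 → ∃ b, b ∈ T ∧ p ∈ b := by
    intro p h1 h2
    obtain ⟨b, hb, hpb⟩ := (hcov p).1 ⟨h1, h2⟩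
    exact ⟨b, hb, hpb⟩
  set blk : ℕ × ℕ → Finset (ℕ × ℕ) :=
    fun p => if h : ∃ b, b ∈ T ∧ p ∈ b then h.choose else ∅ with hblk_def
  have hblk : ∀ p : ℕ × ℕ, p.1 < 10 → p.2 < 13 → blk p ∈ T ∧ p ∈ blk p := by
    intro p h1 h2
    have h := hex p h1 h2
    rw [hblk_def]
    simp only [dif_pos h]
    exact h.choose_spec
  have hblk_eq : ∀ p : ℕ × ℕ, ∀ b ∈ T, p ∈ b → p.1 < 10 → p.2 < 13 → blk p = b := by
    intro p b hb hpb h1 h2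
    obtain ⟨hbt, hpblk⟩ := hblk p h1 h2
    exact huniq _ hbt _ hb p hpblk hpb
  set f : ℕ × ℕ → ℕ := fun p => tatamiDir (blk p) p with hf_def
  -- matching properties of f
  have key : ∀ i j : ℕ, i < 10 → j < 13 →
      (f (i, j) = 1 → j + 1 < 13 ∧ f (i, j+1) = 0) ∧
      (f (i, j) = 0 → ∃ j', j = j' + 1 ∧ f (i, j') = 1) ∧
      (f (i, j) = 3 → i + 1 < 10 ∧ f (i+1, j) = 2) ∧
      (f (i, j) = 2 → ∃ i', i = i' + 1 ∧ f (i', j) = 3) := by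
    intro i j hi hj
    obtain ⟨hbt, hpb⟩ := hblk (i, j) hi hj
    rcases hdom _ hbt with ⟨r, c, hbeq⟩ | ⟨r, c, hbeq⟩
    · rw [hbeq] at hpb
      rcases pair_mem_cases hpb with hp | hp <;> simp only [Prod.mk.injEq] at hp
      · obtain ⟨rfl, rfl⟩ : i = r ∧ j = c := by omega
        have hd : f (i, j) = 1 := by
          simp only [hf_def]; rw [hbeq, tatamiDir_H_left]
        have hmem2 : ((i, j+1) : ℕ × ℕ) ∈ blk (i, j) := by rw [hbeq]; simp
        have hj1 : j + 1 < 13 := (hmem _ hbt _ hmem2).2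
        have hblk2 : blk (i, j+1) = blk (i, j) :=
          hblk_eq (i, j+1) _ hbt hmem2 hi hj1
        refine ⟨fun _ => ⟨hj1, ?_⟩, fun h0 => by omega, fun h3 => by omega,
          fun h2 => by omega⟩
        simp only [hf_def]; rw [hblk2, hbeq, tatamiDir_H_right]
      · obtain ⟨rfl, rfl⟩ : i = r ∧ j = c + 1 := by omega
        have hd : f (i, c+1) = 0 := by
          simp only [hf_def]; rw [hbeq, tatamiDir_H_right]
        have hmem2 : ((i, c) : ℕ × ℕ) ∈ blk (i, c+1) := by rw [hbeq]; simp
        have hc13 : c < 13 := by omega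
        have hblk2 : blk (i, c) = blk (i, c+1) :=
          hblk_eq (i, c) _ hbt hmem2 hi hc13
        refine ⟨fun h1 => by omega, fun _ => ⟨c, rfl, ?_⟩, fun h3 => by omega,
          fun h2 => by omega⟩
        simp only [hf_def]; rw [hblk2, hbeq, tatamiDir_H_left]
    · rw [hbeq] at hpb
      rcases pair_mem_cases hpb with hp | hp <;> simp only [Prod.mk.injEq] at hp
      · obtain ⟨rfl, rfl⟩ : i = r ∧ j = c := by omega
        have hd : f (i, j) = 3 := by
          simp only [hf_def]; rw [hbeq, tatamiDir_V_top]
        have hmem2 : ((i+1, j) : ℕ × ℕ) ∈ blk (i, j) := by rw [hbeq]; simp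
        have hi1 : i + 1 < 10 := (hmem _ hbt _ hmem2).1
        have hblk2 : blk (i+1, j) = blk (i, j) :=
          hblk_eq (i+1, j) _ hbt hmem2 hi1 hj
        refine ⟨fun h1 => by omega, fun h0 => by omega, fun _ => ⟨hi1, ?_⟩,
          fun h2 => by omega⟩
        simp only [hf_def]; rw [hblk2, hbeq, tatamiDir_V_bot]
      · obtain ⟨rfl, rfl⟩ : i = r + 1 ∧ j = c := by omega
        have hd : f (r+1, j) = 2 := by
          simp only [hf_def]; rw [hbeq, tatamiDir_V_bot]
        have hmem2 : ((r, j) : ℕ × ℕ) ∈ blk (r+1, j) := by rw [hbeq]; simp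
        have hr10 : r < 10 := by omega
        have hblk2 : blk (r, j) = blk (r+1, j) :=
          hblk_eq (r, j) _ hbt hmem2 hr10 hj
        refine ⟨fun h1 => by omega, fun h0 => by omega, fun h3 => by omega,
          fun _ => ⟨r, rfl, ?_⟩⟩
        simp only [hf_def]; rw [hblk2, hbeq, tatamiDir_V_top]
  -- the tatami property of f
  have keytat : ∀ i j : ℕ, i + 1 < 10 → j + 1 < 13 →
      f (i, j) = 1 ∨ f (i, j) = 3 ∨ f (i+1, j) = 1 ∨ f (i, j+1) = 3 := by
    intro i j hi hj
    obtain ⟨hb1t, hp1⟩ := hblk (i, j) (by omega) (by omega)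
    obtain ⟨hb2t, hp2⟩ := hblk (i+1, j) (by omega) (by omega)
    obtain ⟨hb3t, hp3⟩ := hblk (i, j+1) (by omega) (by omega)
    obtain ⟨hb4t, hp4⟩ := hblk (i+1, j+1) (by omega) (by omega)
    have h4 := htat i j _ hb1t _ hb2t _ hb3t _ hb4t hp1 hp2 hp3 hp4
    by_contra hcon
    push_neg at hcon
    obtain ⟨hc1, hc2, hc3, hc4⟩ := hcon
    apply h4
    refine ⟨?_, ?_, ?_, ?_, ?_, ?_⟩
    · intro heq
      apply hc2
      have hq : ((i+1, j) : ℕ × ℕ) ∈ blk (i, j) := by rw [heq]; exact hp2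
      have hb : blk (i, j) = {(i, j), (i+1, j)} :=
        block_of_below (hdom _ hb1t) hp1 hq
      simp only [hf_def]; rw [hb, tatamiDir_V_top]
    · intro heq
      apply hc1
      have hq : ((i, j+1) : ℕ × ℕ) ∈ blk (i, j) := by rw [heq]; exact hp3
      have hb : blk (i, j) = {(i, j), (i, j+1)} :=
        block_of_right (hdom _ hb1t) hp1 hq
      simp only [hf_def]; rw [hb, tatamiDir_H_left]
    · intro heq
      have hq : ((i+1, j+1) : ℕ × ℕ) ∈ blk (i, j) := by rw [heq]; exact hp4
      exact block_not_diag (hdom _ hb1t) (by omega) (by omega) hp1 hq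
    · intro heq
      have hq : ((i, j+1) : ℕ × ℕ) ∈ blk (i+1, j) := by rw [heq]; exact hp3
      exact block_not_diag (hdom _ hb2t) (by omega) (by omega) hp2 hq
    · intro heq
      apply hc3
      have hq : ((i+1, j+1) : ℕ × ℕ) ∈ blk (i+1, j) := by rw [heq]; exact hp4
      have hb : blk (i+1, j) = {(i+1, j), (i+1, j+1)} :=
        block_of_right (hdom _ hb2t) hp2 hq
      simp only [hf_def]; rw [hb, tatamiDir_H_left]
    · intro heq
      apply hc4
      have hq : ((i+1, j+1) : ℕ × ℕ) ∈ blk (i, j+1) := by rw [heq]; exact hp4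
      have hb : blk (i, j+1) = {(i, j+1), (i+1, j+1)} :=
        block_of_below (hdom _ hb3t) hp3 hq
      simp only [hf_def]; rw [hb, tatamiDir_V_top]
  -- now transfer to the linear enumeration and run the search
  have hg : ∀ q : ℕ, f (q % 10, q / 10) < 4 := fun q => tatamiDir_lt_4 _ _
  have main := tatamiGo_complete (fun q => f (q % 10, q / 10)) hg
    (by -- H1
      intro p hp h0
      replace h0 : f (p % 10, p / 10) = 0 := h0
      obtain ⟨j', hj', h1⟩ := (key (p % 10) (p / 10) (by omega) (by omega)).2.1 h0
      have h10 : 10 ≤ p := by omega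
      have e1 : (p - 10) % 10 = p % 10 := by omega
      have e2 : (p - 10) / 10 = j' := by omega
      refine ⟨h10, ?_⟩
      show f ((p - 10) % 10, (p - 10) / 10) = 1
      rw [e1, e2]; exact h1)
    (by -- H1'
      intro p hp h10 hL
      replace hL : f ((p - 10) % 10, (p - 10) / 10) = 1 := hL
      have e1 : (p - 10) % 10 = p % 10 := by omega
      have e2 : (p - 10) / 10 = p / 10 - 1 := by omega
      rw [e1, e2] at hL
      have := (key (p % 10) (p / 10 - 1) (by omega) (by omega)).1 hL
      have e3 : p / 10 - 1 + 1 = p / 10 := by omega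
      rw [e3] at this
      show f (p % 10, p / 10) = 0
      exact this.2)
    (by -- H2
      intro p hp h2
      replace h2 : f (p % 10, p / 10) = 2 := h2
      obtain ⟨i', hi', h3⟩ := (key (p % 10) (p / 10) (by omega) (by omega)).2.2.2 h2
      have h1 : p % 10 ≠ 0 := by omega
      have e1 : (p - 1) % 10 = i' := by omega
      have e2 : (p - 1) / 10 = p / 10 := by omega
      refine ⟨h1, ?_⟩
      show f ((p - 1) % 10, (p - 1) / 10) = 3
      rw [e1, e2]; exact h3)
    (by -- H2'
      intro p hp hi hU
      replace hU : f ((p - 1) % 10, (p - 1) / 10) = 3 := hU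
      have e1 : (p - 1) % 10 = p % 10 - 1 := by omega
      have e2 : (p - 1) / 10 = p / 10 := by omega
      rw [e1, e2] at hU
      have := (key (p % 10 - 1) (p / 10) (by omega) (by omega)).2.2.1 hU
      have e3 : p % 10 - 1 + 1 = p % 10 := by omega
      rw [e3] at this
      show f (p % 10, p / 10) = 2
      exact this.2)
    (by -- H3
      intro p hp h3
      replace h3 : f (p % 10, p / 10) = 3 := h3
      have := (key (p % 10) (p / 10) (by omega) (by omega)).2.2.1 h3
      omega)
    (by -- H4
      intro p hp h1
      replace h1 : f (p % 10, p / 10) = 1 := h1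
      have := (key (p % 10) (p / 10) (by omega) (by omega)).1 h1
      omega)
    (by -- H5
      intro p hp hi h10
      have e1 : (p - 10) % 10 = p % 10 := by omega
      have e2 : (p - 10) / 10 = p / 10 - 1 := by omega
      have e3 : (p - 9) % 10 = p % 10 + 1 := by omega
      have e4 : (p - 9) / 10 = p / 10 - 1 := by omega
      have e5 : p / 10 - 1 + 1 = p / 10 := by omega
      have := keytat (p % 10) (p / 10 - 1) (by omega) (by omega)
      rw [e5] at this
      show f ((p - 10) % 10, (p - 10) / 10) = 1 ∨ f ((p - 10) % 10, (p - 10) / 10) = 3 ∨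
        f ((p - 9) % 10, (p - 9) / 10) = 1 ∨ f (p % 10, p / 10) = 3
      rw [e1, e2, e3, e4]
      exact this)
  have hrun := main 130 0 rfl
  rw [show tatamiW (fun q => f (q % 10, q / 10)) 0 = 0 from rfl] at hrun
  rw [tatamiGo_false] at hrun
  exact Bool.false_ne_true hrun
end
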